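/- arXiv:1306.0634 — 3 statements merged into one kernel-verified Lean document; each statement's English description precedes it below -/
import Mathlib

section
/- Let s ≥ 2, r ≥ 4 be integers and S = {n1, n2, ..., ns} with n1 > n2 > ... > ns positive integers. If ns = r − 1 (that is, r − 1 ∈ S), then every r-uniform bi-hypergraph H = (X, B) which is a one-realization of S satisfies |X| ≥ r(r − 1) − 1. -/
/-- A bi-hypergraph: a finite vertex set together with a family of bi-edges,
each bi-edge being a subset of the vertex set. -/
structure BiHypergraph (α : Type*) [DecidableEq α] where
  verts : Finset α
  edges : Finset (Finset α)
  edges_sub : ∀ e ∈ edges, e ⊆ verts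

namespace BiHypergraph

variable {α : Type*} [DecidableEq α]

/-- `H` is `r`-uniform: every bi-edge has exactly `r` vertices. -/
def IsUniform (H : BiHypergraph α) (r : ℕ) : Prop :=
  ∀ e ∈ H.edges, e.card = r

/-- `P` is a strict coloring of `H`: a partition of the vertex set into nonempty
classes such that every bi-edge has at least two vertices lying in a common class
and at least two vertices lying in distinct classes.  A strict `k`-coloring is a
strict coloring `P` with `P.card = k`. -/
def IsStrictColoring (H : BiHypergraph α) (P : Finset (Finset α)) : Prop :=
  (∀ C ∈ P, C.Nonempty) ∧
  (∀ C ∈ P, C ⊆ H.verts) ∧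
  (∀ x ∈ H.verts, ∃! C, C ∈ P ∧ x ∈ C) ∧
  (∀ e ∈ H.edges,
    (∃ C ∈ P, 2 ≤ (e ∩ C).card) ∧
    (∃ x ∈ e, ∃ y ∈ e, ∃ C ∈ P, ∃ D ∈ P, C ≠ D ∧ x ∈ C ∧ y ∈ D))

/-- The feasible set of `H`: all `k` such that `H` admits a strict `k`-coloring. -/
def feasibleSet (H : BiHypergraph α) : Set ℕ :=
  {k | ∃ P : Finset (Finset α), H.IsStrictColoring P ∧ P.card = k}

/-- `H` is a one-realization of `S`: its feasible set is `S`, and for every `k`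
there is at most one partition which is a strict `k`-coloring of `H`. -/
def IsOneRealization (H : BiHypergraph α) (S : Finset ℕ) : Prop :=
  H.feasibleSet = ↑S ∧
  ∀ P Q : Finset (Finset α), H.IsStrictColoring P → H.IsStrictColoring Q →
    P.card = Q.card → P = Q

end BiHypergraph

namespace BiHypergraph

variable {α : Type*} [DecidableEq α]

lemma disj_of_strict {H : BiHypergraph α} {P : Finset (Finset α)}
    (hP : H.IsStrictColoring P) :
    ∀ C ∈ P, ∀ D ∈ P, C ≠ D → ∀ x, x ∈ C → x ∈ D → False := by
  intro C hC D hD hne x hxC hxD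
  have hxv : x ∈ H.verts := hP.2.1 C hC hxC
  obtain ⟨E, -, hEuniq⟩ := hP.2.2.1 x hxv
  exact hne ((hEuniq C ⟨hC, hxC⟩).trans (hEuniq D ⟨hD, hxD⟩).symm)

lemma cov_of_strict {H : BiHypergraph α} {P : Finset (Finset α)}
    (hP : H.IsStrictColoring P) :
    ∀ x ∈ H.verts, ∃ C ∈ P, x ∈ C := by
  intro x hx
  obtain ⟨C, ⟨hC, hxC⟩, -⟩ := hP.2.2.1 x hx
  exact ⟨C, hC, hxC⟩

lemma no_mono_of_strict {H : BiHypergraph α} {P : Finset (Finset α)}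
    (hP : H.IsStrictColoring P) :
    ∀ e ∈ H.edges, ∀ C ∈ P, ¬ e ⊆ C := by
  intro e he C₀ hC₀ hsub
  obtain ⟨-, ⟨x, hx, y, hy, C, hC, D, hD, hCD, hxC, hyD⟩⟩ := hP.2.2.2 e he
  have h1 : C = C₀ := by
    by_contra h
    exact disj_of_strict hP C hC C₀ hC₀ h x hxC (hsub hx)
  have h2 : D = C₀ := by
    by_contra h
    exact disj_of_strict hP D hD C₀ hC₀ h y hyD (hsub hy)
  exact hCD (h1.trans h2.symm)

lemma build_strict {H : BiHypergraph α} {r : ℕ} (hU : H.IsUniform r) (hr0 : 0 < r)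
    (P' : Finset (Finset α))
    (h1 : ∀ C ∈ P', C.Nonempty)
    (h2 : ∀ C ∈ P', C ⊆ H.verts)
    (hcov : ∀ x ∈ H.verts, ∃ C ∈ P', x ∈ C)
    (hdis : ∀ C ∈ P', ∀ D ∈ P', C ≠ D → ∀ x, x ∈ C → x ∈ D → False)
    (hnm : ∀ e ∈ H.edges, ∀ C ∈ P', ¬ e ⊆ C)
    (hcard : P'.card < r) :
    H.IsStrictColoring P' := by
  refine ⟨h1, h2, ?_, ?_⟩
  · intro x hx
    obtain ⟨C, hC, hxC⟩ := hcov x hx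
    refine ⟨C, ⟨hC, hxC⟩, fun D hD => ?_⟩
    by_contra h
    exact hdis D hD.1 C hC h x hD.2 hxC
  · intro e he
    have hecard : e.card = r := hU e he
    constructor
    · by_contra h
      push_neg at h
      have hsub : e ⊆ P'.biUnion (fun C => e ∩ C) := by
        intro x hx
        obtain ⟨C, hC, hxC⟩ := hcov x (H.edges_sub e he hx)
        exact Finset.mem_biUnion.mpr ⟨C, hC, Finset.mem_inter.mpr ⟨hx, hxC⟩⟩
      have h1' := Finset.card_le_card hsub
      have h2' := Finset.card_biUnion_le (s := P') (t := fun C => e ∩ C)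
      have h3' : ∑ C ∈ P', (e ∩ C).card ≤ P'.card * 1 := by
        have := Finset.sum_le_card_nsmul P' (fun C => (e ∩ C).card) 1
          (fun C hC => by show (e ∩ C).card ≤ 1; have := h C hC; omega)
        simpa using this
      omega
    · have hene : e.Nonempty := Finset.card_pos.mp (by omega)
      obtain ⟨x, hx⟩ := hene
      obtain ⟨C, hC, hxC⟩ := hcov x (H.edges_sub e he hx)
      have : ¬ e ⊆ C := hnm e he C hC
      obtain ⟨y, hy, hyC⟩ := Finset.not_subset.mp this
      obtain ⟨D, hD, hyD⟩ := hcov y (H.edges_sub e he hy)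
      exact ⟨x, hx, y, hy, C, hC, D, hD, fun h => hyC (h ▸ hyD), hxC, hyD⟩

lemma replace_strict {H : BiHypergraph α} {r : ℕ} (hU : H.IsUniform r) (hr0 : 0 < r)
    {P : Finset (Finset α)} (hP : H.IsStrictColoring P)
    {C₁ C₂ : Finset α} (hC₁ : C₁ ∈ P) (hC₂ : C₂ ∈ P) (hne : C₁ ≠ C₂)
    (R : Finset (Finset α))
    (hRmem : ∀ x, (∃ C ∈ R, x ∈ C) ↔ (x ∈ C₁ ∨ x ∈ C₂))
    (hRne : ∀ C ∈ R, C.Nonempty)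
    (hRd : ∀ C ∈ R, ∀ D ∈ R, C ≠ D → ∀ x, x ∈ C → x ∈ D → False)
    (hRnm : ∀ e ∈ H.edges, ∀ C ∈ R, ¬ e ⊆ C)
    (hcard : R.card + (P.card - 2) < r) :
    H.IsStrictColoring (R ∪ ((P.erase C₁).erase C₂)) ∧
      (R ∪ ((P.erase C₁).erase C₂)).card = R.card + (P.card - 2) := by
  set Q := (P.erase C₁).erase C₂ with hQdef
  have hQfacts : ∀ D ∈ Q, D ∈ P ∧ D ≠ C₁ ∧ D ≠ C₂ := by
    intro D hD
    rw [hQdef, Finset.mem_erase, Finset.mem_erase] at hD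
    exact ⟨hD.2.2, hD.2.1, hD.1⟩
  have hRsub : ∀ C ∈ R, C ⊆ C₁ ∪ C₂ := by
    intro C hC x hx
    rcases (hRmem x).mp ⟨C, hC, hx⟩ with h | h
    · exact Finset.mem_union_left _ h
    · exact Finset.mem_union_right _ h
  have hRQ : Disjoint R Q := by
    rw [Finset.disjoint_left]
    intro C hCR hCQ
    obtain ⟨hCP, hne1, hne2⟩ := hQfacts C hCQ
    obtain ⟨x, hx⟩ := hRne C hCR
    rcases Finset.mem_union.mp (hRsub C hCR hx) with h | h
    · exact disj_of_strict hP C hCP C₁ hC₁ hne1 x hx h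
    · exact disj_of_strict hP C hCP C₂ hC₂ hne2 x hx h
  have hQcard : Q.card = P.card - 2 := by
    have h1 : C₂ ∈ P.erase C₁ := Finset.mem_erase.mpr ⟨fun h => hne h.symm, hC₂⟩
    have h2 : (P.erase C₁).card = P.card - 1 := Finset.card_erase_of_mem hC₁
    have h3 : Q.card = (P.erase C₁).card - 1 := Finset.card_erase_of_mem h1
    omega
  have hcard' : (R ∪ Q).card = R.card + (P.card - 2) := by
    rw [Finset.card_union_of_disjoint hRQ, hQcard]
  refine ⟨build_strict hU hr0 _ ?_ ?_ ?_ ?_ ?_ (by omega), hcard'⟩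
  · intro C hC
    rcases Finset.mem_union.mp hC with h | h
    · exact hRne C h
    · exact hP.1 C (hQfacts C h).1
  · intro C hC
    rcases Finset.mem_union.mp hC with h | h
    · intro x hx
      rcases Finset.mem_union.mp (hRsub C h hx) with h' | h'
      · exact hP.2.1 C₁ hC₁ h'
      · exact hP.2.1 C₂ hC₂ h'
    · exact hP.2.1 C (hQfacts C h).1
  · intro x hx
    obtain ⟨C, hC, hxC⟩ := cov_of_strict hP x hx
    by_cases h : C = C₁ ∨ C = C₂
    · have hx12 : x ∈ C₁ ∨ x ∈ C₂ := by
        rcases h with h | h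
        · exact Or.inl (h ▸ hxC)
        · exact Or.inr (h ▸ hxC)
      obtain ⟨D, hD, hxD⟩ := (hRmem x).mpr hx12
      exact ⟨D, Finset.mem_union_left _ hD, hxD⟩
    · push_neg at h
      refine ⟨C, Finset.mem_union_right _ ?_, hxC⟩
      exact Finset.mem_erase.mpr ⟨h.2, Finset.mem_erase.mpr ⟨h.1, hC⟩⟩
  · intro C hC D hD hCD x hxC hxD
    rcases Finset.mem_union.mp hC with h | h <;> rcases Finset.mem_union.mp hD with h' | h'
    · exact hRd C h D h' hCD x hxC hxD
    · obtain ⟨hDP, hne1, hne2⟩ := hQfacts D h'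
      rcases Finset.mem_union.mp (hRsub C h hxC) with hh | hh
      · exact disj_of_strict hP D hDP C₁ hC₁ hne1 x hxD hh
      · exact disj_of_strict hP D hDP C₂ hC₂ hne2 x hxD hh
    · obtain ⟨hCP, hne1, hne2⟩ := hQfacts C h
      rcases Finset.mem_union.mp (hRsub D h' hxD) with hh | hh
      · exact disj_of_strict hP C hCP C₁ hC₁ hne1 x hxC hh
      · exact disj_of_strict hP C hCP C₂ hC₂ hne2 x hxC hh
    · exact disj_of_strict hP C (hQfacts C h).1 D (hQfacts D h').1 hCD x hxC hxD
  · intro e he C hC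
    rcases Finset.mem_union.mp hC with h | h
    · exact hRnm e he C h
    · exact no_mono_of_strict hP e he C (hQfacts C h).1


end BiHypergraph

open BiHypergraph

theorem stmt4 (s r : ℕ) (hs : 2 ≤ s) (hr : 4 ≤ r)
    (n : ℕ → ℕ) (hpos : ∀ i < s, 0 < n i)
    (hanti : ∀ i j, i < j → j < s → n j < n i)
    (hlast : n (s - 1) = r - 1)
    {α : Type*} [DecidableEq α] (H : BiHypergraph α)
    (hU : H.IsUniform r)
    (hOR : H.IsOneRealization ((Finset.range s).image n)) :
    r * (r - 1) - 1 ≤ H.verts.card := by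
  obtain ⟨m, rfl⟩ : ∃ m, r = m + 4 := ⟨r - 4, by omega⟩
  have hr0 : 0 < m + 4 := by omega
  -- m+3 = r-1 is feasible
  have hmem : (m + 3) ∈ H.feasibleSet := by
    rw [hOR.1]
    have h1 : n (s - 1) ∈ (Finset.range s).image n :=
      Finset.mem_image.mpr ⟨s - 1, Finset.mem_range.mpr (by omega), rfl⟩
    have h3 : n (s - 1) = m + 3 := by omega
    rw [h3] at h1
    exact_mod_cast h1
  obtain ⟨P, hP, hPcard⟩ := hmem
  have hPcard' : P.card = m + 3 := hPcard
  have hPd := disj_of_strict hP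
  have hPnm := no_mono_of_strict hP
  -- every feasible value is at least m+3
  have hnofeas : ∀ k, k ∈ H.feasibleSet → m + 3 ≤ k := by
    intro k hk
    rw [hOR.1] at hk
    obtain ⟨i, hi, hni⟩ := Finset.mem_image.mp (by exact_mod_cast hk)
    rw [Finset.mem_range] at hi
    have hlast' : n (s - 1) = m + 3 := by omega
    rcases eq_or_lt_of_le (by omega : i ≤ s - 1) with h | h
    · rw [h] at hni; omega
    · have := hanti i (s - 1) h (by omega)
      omega
  -- Lemma A : every class has at least m+3 vertices
  have lemA : ∀ C ∈ P, m + 3 ≤ C.card := by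
    intro C₁ hC₁
    by_contra hsmall
    have hsmall' : C₁.card ≤ m + 2 := by omega
    by_cases hex : ∃ C ∈ P, C ≠ C₁ ∧ 2 ≤ C.card
    · -- move a vertex from a big class into C₁ : a second (m+3)-coloring
      obtain ⟨C₂, hC₂, hne, h2⟩ := hex
      obtain ⟨v, hv⟩ := Finset.card_pos.mp (by omega : 0 < C₂.card)
      have hvC₁ : v ∉ C₁ := fun h => hPd C₂ hC₂ C₁ hC₁ hne v hv h
      set A : Finset α := insert v C₁ with hAdef
      set B : Finset α := C₂.erase v with hBdef
      have hABne : A ≠ B := by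
        intro h
        have : v ∈ B := h ▸ Finset.mem_insert_self v C₁
        exact (Finset.mem_erase.mp this).1 rfl
      have hABd : ∀ x, x ∈ A → x ∈ B → False := by
        intro x hxA hxB
        rcases Finset.mem_insert.mp hxA with rfl | hx1
        · exact (Finset.mem_erase.mp hxB).1 rfl
        · exact hPd C₂ hC₂ C₁ hC₁ hne x (Finset.mem_of_mem_erase hxB) hx1
      set R : Finset (Finset α) := {A, B} with hRdef
      have hRcard : R.card = 2 := by
        rw [hRdef, Finset.card_insert_of_notMem (by simp [hABne]), Finset.card_singleton]
      have hrep := replace_strict hU hr0 hP hC₂ hC₁ hne R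
        (by
          intro x
          constructor
          · rintro ⟨C, hC, hx⟩
            rcases Finset.mem_insert.mp hC with rfl | hC
            · rcases Finset.mem_insert.mp hx with rfl | hx1
              · exact Or.inl hv
              · exact Or.inr hx1
            · rw [Finset.mem_singleton] at hC
              subst hC
              exact Or.inl (Finset.mem_of_mem_erase hx)
          · rintro (hx | hx)
            · by_cases hxv : x = v
              · exact ⟨A, Finset.mem_insert_self _ _, hxv ▸ Finset.mem_insert_self v C₁⟩
              · exact ⟨B, Finset.mem_insert_of_mem (Finset.mem_singleton_self _),
                  Finset.mem_erase.mpr ⟨hxv, hx⟩⟩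
            · exact ⟨A, Finset.mem_insert_self _ _, Finset.mem_insert_of_mem hx⟩)
        (by
          intro C hC
          rcases Finset.mem_insert.mp hC with rfl | hC
          · exact ⟨v, Finset.mem_insert_self v C₁⟩
          · rw [Finset.mem_singleton] at hC
            subst hC
            exact Finset.card_pos.mp (by rw [hBdef, Finset.card_erase_of_mem hv]; omega)
        )
        (by
          intro C hC D hD hCD x hxC hxD
          rcases Finset.mem_insert.mp hC with rfl | hC <;>
            rcases Finset.mem_insert.mp hD with rfl | hD
          · exact hCD rfl
          · rw [Finset.mem_singleton] at hD; subst hD; exact hABd x hxC hxD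
          · rw [Finset.mem_singleton] at hC; subst hC; exact hABd x hxD hxC
          · rw [Finset.mem_singleton] at hC hD; exact hCD (hC.trans hD.symm)
        )
        (by
          intro e he C hC
          rcases Finset.mem_insert.mp hC with rfl | hC
          · intro hsub
            have h1 := Finset.card_le_card hsub
            have h2' : A.card ≤ C₁.card + 1 := Finset.card_insert_le v C₁
            have := hU e he
            omega
          · rw [Finset.mem_singleton] at hC; subst hC
            intro hsub
            exact hPnm e he C₂ hC₂ (hsub.trans (Finset.erase_subset v C₂))
        )
        (by rw [hRcard, hPcard']; omega)
      obtain ⟨hP', hP'card⟩ := hrep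
      have heq := hOR.2 _ P hP' hP (by rw [hP'card, hRcard, hPcard']; omega)
      have hAP : A ∈ P := by
        rw [← heq]
        exact Finset.mem_union_left _ (Finset.mem_insert_self _ _)
      have hA2 : A = C₂ := by
        by_contra h
        exact hPd A hAP C₂ hC₂ h v (Finset.mem_insert_self v C₁) hv
      obtain ⟨x, hx⟩ := hP.1 C₁ hC₁
      have hx2 : x ∈ C₂ := hA2 ▸ (Finset.mem_insert_of_mem hx)
      exact hPd C₂ hC₂ C₁ hC₁ hne x hx2 hx
    · -- all other classes are singletons: merge one into C₁, get an (m+2)-coloring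
      push_neg at hex
      obtain ⟨C₂, hC₂, hne⟩ :=
        Finset.exists_mem_ne (by omega : 1 < P.card) C₁
      have hC₂card : C₂.card ≤ 1 := by have := hex C₂ hC₂ hne; omega
      set A : Finset α := C₁ ∪ C₂ with hAdef
      set R : Finset (Finset α) := {A} with hRdef
      have hrep := replace_strict hU hr0 hP hC₁ hC₂ (Ne.symm hne) R
        (by
          intro x
          constructor
          · rintro ⟨C, hC, hx⟩
            rw [Finset.mem_singleton] at hC; subst hC
            exact Finset.mem_union.mp hx
          · intro hx
            exact ⟨A, Finset.mem_singleton_self _, Finset.mem_union.mpr hx⟩)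
        (by
          intro C hC
          rw [Finset.mem_singleton] at hC; subst hC
          obtain ⟨x, hx⟩ := hP.1 C₁ hC₁
          exact ⟨x, Finset.mem_union_left _ hx⟩)
        (by
          intro C hC D hD hCD x hxC hxD
          rw [Finset.mem_singleton] at hC hD
          exact hCD (hC.trans hD.symm))
        (by
          intro e he C hC
          rw [Finset.mem_singleton] at hC; subst hC
          intro hsub
          have h1 := Finset.card_le_card hsub
          have h2' : A.card ≤ C₁.card + C₂.card := Finset.card_union_le C₁ C₂
          have := hU e he
          omega)
        (by rw [hRdef, Finset.card_singleton, hPcard']; omega)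
      obtain ⟨hP', hP'card⟩ := hrep
      have hfeas : (m + 2) ∈ H.feasibleSet := by
        refine ⟨_, hP', ?_⟩
        rw [hP'card, hRdef, Finset.card_singleton, hPcard']
        omega
      have := hnofeas _ hfeas
      omega
  -- Lemma B : at most one class has exactly m+3 vertices
  have lemB : ∀ C ∈ P, ∀ D ∈ P, C ≠ D → C.card ≤ m + 3 → D.card ≤ m + 3 → False := by
    intro C₁ hC₁ C₂ hC₂ hne h1 h2
    have h1' : C₁.card = m + 3 := le_antisymm h1 (lemA C₁ hC₁)
    have h2' : C₂.card = m + 3 := le_antisymm h2 (lemA C₂ hC₂)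
    obtain ⟨v, hv⟩ := hP.1 C₁ hC₁
    obtain ⟨w, hw⟩ := hP.1 C₂ hC₂
    have hvw : v ∉ C₂ := fun h => hPd C₁ hC₁ C₂ hC₂ hne v hv h
    have hwv : w ∉ C₁ := fun h => hPd C₁ hC₁ C₂ hC₂ hne w h hw
    set A : Finset α := insert w (C₁.erase v) with hAdef
    set B : Finset α := insert v (C₂.erase w) with hBdef
    have hABne : A ≠ B := by
      intro h
      have hwB : w ∈ B := h ▸ Finset.mem_insert_self w (C₁.erase v)
      rcases Finset.mem_insert.mp hwB with h' | h'
      · exact hvw (h' ▸ hw)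
      · exact (Finset.mem_erase.mp h').1 rfl
    have hABd : ∀ x, x ∈ A → x ∈ B → False := by
      intro x hxA hxB
      rcases Finset.mem_insert.mp hxA with rfl | hx1 <;>
        rcases Finset.mem_insert.mp hxB with h' | h'
      · exact hvw (h' ▸ hw)
      · exact (Finset.mem_erase.mp h').1 rfl
      · exact (Finset.mem_erase.mp hx1).1 h'
      · exact hPd C₁ hC₁ C₂ hC₂ hne x (Finset.mem_of_mem_erase hx1)
          (Finset.mem_of_mem_erase h')
    set R : Finset (Finset α) := {A, B} with hRdef
    have hRcard : R.card = 2 := by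
      rw [hRdef, Finset.card_insert_of_notMem (by simp [hABne]), Finset.card_singleton]
    have hAcard : A.card ≤ m + 3 := by
      have h3 : A.card ≤ (C₁.erase v).card + 1 := Finset.card_insert_le w (C₁.erase v)
      have h4 := Finset.card_erase_of_mem hv
      omega
    have hBcard : B.card ≤ m + 3 := by
      have h3 : B.card ≤ (C₂.erase w).card + 1 := Finset.card_insert_le v (C₂.erase w)
      have h4 := Finset.card_erase_of_mem hw
      omega
    have hrep := replace_strict hU hr0 hP hC₁ hC₂ hne R
      (by
        intro x
        constructor
        · rintro ⟨C, hC, hx⟩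
          rcases Finset.mem_insert.mp hC with rfl | hC
          · rcases Finset.mem_insert.mp hx with rfl | hx1
            · exact Or.inr hw
            · exact Or.inl (Finset.mem_of_mem_erase hx1)
          · rw [Finset.mem_singleton] at hC; subst hC
            rcases Finset.mem_insert.mp hx with rfl | hx1
            · exact Or.inl hv
            · exact Or.inr (Finset.mem_of_mem_erase hx1)
        · rintro (hx | hx)
          · by_cases hxv : x = v
            · exact ⟨B, Finset.mem_insert_of_mem (Finset.mem_singleton_self _),
                hxv ▸ Finset.mem_insert_self v (C₂.erase w)⟩
            · exact ⟨A, Finset.mem_insert_self _ _,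
                Finset.mem_insert_of_mem (Finset.mem_erase.mpr ⟨hxv, hx⟩)⟩
          · by_cases hxw : x = w
            · exact ⟨A, Finset.mem_insert_self _ _,
                hxw ▸ Finset.mem_insert_self w (C₁.erase v)⟩
            · exact ⟨B, Finset.mem_insert_of_mem (Finset.mem_singleton_self _),
                Finset.mem_insert_of_mem (Finset.mem_erase.mpr ⟨hxw, hx⟩)⟩)
      (by
        intro C hC
        rcases Finset.mem_insert.mp hC with rfl | hC
        · exact ⟨w, Finset.mem_insert_self _ _⟩
        · rw [Finset.mem_singleton] at hC; subst hC
          exact ⟨v, Finset.mem_insert_self _ _⟩)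
      (by
        intro C hC D hD hCD x hxC hxD
        rcases Finset.mem_insert.mp hC with rfl | hC <;>
          rcases Finset.mem_insert.mp hD with rfl | hD
        · exact hCD rfl
        · rw [Finset.mem_singleton] at hD; subst hD; exact hABd x hxC hxD
        · rw [Finset.mem_singleton] at hC; subst hC; exact hABd x hxD hxC
        · rw [Finset.mem_singleton] at hC hD; exact hCD (hC.trans hD.symm))
      (by
        intro e he C hC
        have hecard := hU e he
        rcases Finset.mem_insert.mp hC with rfl | hC
        · intro hsub
          have := Finset.card_le_card hsub
          omega
        · rw [Finset.mem_singleton] at hC; subst hC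
          intro hsub
          have := Finset.card_le_card hsub
          omega)
      (by rw [hRcard, hPcard']; omega)
    obtain ⟨hP', hP'card⟩ := hrep
    have heq := hOR.2 _ P hP' hP (by rw [hP'card, hRcard, hPcard']; omega)
    have hAP : A ∈ P := by
      rw [← heq]
      exact Finset.mem_union_left _ (Finset.mem_insert_self _ _)
    have hA2 : A = C₂ := by
      by_contra h
      exact hPd A hAP C₂ hC₂ h w (Finset.mem_insert_self _ _) hw
    obtain ⟨x, hx⟩ := Finset.card_pos.mp
      (by rw [Finset.card_erase_of_mem hv]; omega : 0 < (C₁.erase v).card)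
    have hx2 : x ∈ C₂ := hA2 ▸ (Finset.mem_insert_of_mem hx)
    exact hPd C₁ hC₁ C₂ hC₂ hne x (Finset.mem_of_mem_erase hx) hx2
  -- counting
  have hsum : H.verts.card = ∑ C ∈ P, C.card := by
    have hveq : H.verts = P.biUnion id := by
      ext x
      simp only [Finset.mem_biUnion, id]
      constructor
      · intro hx; exact cov_of_strict hP x hx
      · rintro ⟨C, hC, hxC⟩; exact hP.2.1 C hC hxC
    have hd : ∀ C ∈ P, ∀ D ∈ P, C ≠ D → Disjoint (id C) (id D) := by
      intro C hC D hD hne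
      rw [Finset.disjoint_left]
      intro x hxC hxD
      exact hPd C hC D hD hne x hxC hxD
    rw [hveq, Finset.card_biUnion hd]
    rfl
  rw [show m + 4 - 1 = m + 3 from rfl, Nat.sub_le_iff_le_add]
  by_cases hall : ∀ C ∈ P, m + 4 ≤ C.card
  · have h := Finset.card_nsmul_le_sum P (fun C => C.card) (m + 4) hall
    rw [hPcard', smul_eq_mul] at h
    nlinarith [hsum, h]
  · push_neg at hall
    obtain ⟨C₀, hC₀, hC₀lt⟩ := hall
    have hothers : ∀ C ∈ P.erase C₀, m + 4 ≤ C.card := by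
      intro C hC
      obtain ⟨hCne, hCP⟩ := Finset.mem_erase.mp hC
      by_contra h
      exact lemB C hCP C₀ hC₀ hCne (by omega) (by omega)
    have h1 := Finset.card_nsmul_le_sum (P.erase C₀) (fun C => C.card) (m + 4) hothers
    rw [Finset.card_erase_of_mem hC₀, hPcard', smul_eq_mul] at h1
    have h1' : (m + 2) * (m + 4) ≤ ∑ C ∈ P.erase C₀, C.card := h1
    have h2 : m + 3 ≤ C₀.card := lemA C₀ hC₀
    have h3 := Finset.sum_erase_add P (fun C => C.card) hC₀
    nlinarith [hsum, h1', h2, h3]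
end

section
/- For every integer r ≥ 4, there exists an r-uniform bi-hypergraph with exactly r(r − 1) + 3 vertices which is a one-realization of {r + 2, r + 1}. -/
namespace Constr

/-- number of vertices -/
def nV (r : ℕ) : ℕ := r * (r - 1) + 3

/-- the blocks `W i`, `i < r`.  For `i < r-1` the block has size `r-1`,
the last block `W (r-1)` has size `r`. -/
def W (r i : ℕ) : Finset ℕ :=
  if i = r - 1 then Finset.Ico (2 + i * (r-1)) (2 + i * (r-1) + r)
  else Finset.Ico (2 + i * (r-1)) (2 + (i+1) * (r-1))

def V (r : ℕ) : Finset ℕ := Finset.range (nV r)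

lemma W_last (r : ℕ) : W r (r-1) = Finset.Ico (2 + (r-1)*(r-1)) (2 + (r-1)*(r-1) + r) := by
  simp [W]

lemma W_of_lt {r i : ℕ} (h : i < r - 1) :
    W r i = Finset.Ico (2 + i * (r-1)) (2 + (i+1) * (r-1)) := by
  simp [W, Nat.ne_of_lt h]

lemma card_W_last (r : ℕ) : (W r (r-1)).card = r := by
  simp [W_last]

lemma card_W_of_lt {r i : ℕ} (hr : 4 ≤ r) (h : i < r - 1) : (W r i).card = r - 1 := by
  rw [W_of_lt h, Nat.card_Ico]
  have : (i+1) * (r-1) = i * (r-1) + (r-1) := by ring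
  omega

lemma W_nonempty {r i : ℕ} (hr : 4 ≤ r) (h : i < r) : (W r i).Nonempty := by
  rw [← Finset.card_pos]
  rcases eq_or_ne i (r-1) with h1 | h1
  · rw [h1, card_W_last]; omega
  · rw [card_W_of_lt hr (by omega)]; omega

lemma nV_eq (r : ℕ) (hr : 4 ≤ r) : nV r = 2 + (r-1)*(r-1) + r := by
  have : r * (r-1) = (r-1)*(r-1) + (r-1) := by
    have : r = (r-1) + 1 := by omega
    nth_rewrite 1 [this]; ring
  simp [nV]; omega

lemma mem_W_lb {r i x : ℕ} (h : x ∈ W r i) : 2 + i * (r-1) ≤ x := by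
  unfold W at h; split at h <;> simp [Finset.mem_Ico] at h <;> omega

lemma two_le_of_mem_W {r i x : ℕ} (h : x ∈ W r i) : 2 ≤ x := by
  have := mem_W_lb h; omega

lemma zero_not_mem_W {r i : ℕ} : 0 ∉ W r i := fun h => by have := two_le_of_mem_W h; omega

lemma one_not_mem_W {r i : ℕ} : 1 ∉ W r i := fun h => by have := two_le_of_mem_W h; omega

lemma W_subset_V {r i : ℕ} (hr : 4 ≤ r) (h : i < r) : W r i ⊆ V r := by
  intro x hx
  rw [V, Finset.mem_range, nV_eq r hr]
  rcases eq_or_ne i (r-1) with h1 | h1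
  · rw [h1, W_last, Finset.mem_Ico] at hx; omega
  · rw [W_of_lt (by omega), Finset.mem_Ico] at hx
    have h2 : (i+1) * (r-1) ≤ (r-1) * (r-1) := by
      apply Nat.mul_le_mul_right; omega
    omega

lemma W_disjoint {r i j : ℕ} (hr : 4 ≤ r) (hi : i < r) (hj : j < r) (hij : i ≠ j) :
    Disjoint (W r i) (W r j) := by
  -- wlog i < j
  have key : ∀ a b : ℕ, a < b → b < r → Disjoint (W r a) (W r b) := by
    intro a b hab hbr
    rw [Finset.disjoint_left]
    intro x hxa hxb
    have ha : a < r - 1 := by omega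
    rw [W_of_lt ha, Finset.mem_Ico] at hxa
    have hub : x < 2 + (a+1) * (r-1) := hxa.2
    have hlb : 2 + b * (r-1) ≤ x := mem_W_lb hxb
    have : (a+1) * (r-1) ≤ b * (r-1) := Nat.mul_le_mul_right _ (by omega)
    omega
  rcases lt_or_gt_of_ne hij with h | h
  · exact key i j h hj
  · exact (key j i h hi).symm

/-- covering: every vertex `≥ 2` is in some block -/
lemma exists_mem_W {r x : ℕ} (hr : 4 ≤ r) (hx : x ∈ V r) (h2 : 2 ≤ x) :
    ∃ i < r, x ∈ W r i := by
  rw [V, Finset.mem_range, nV_eq r hr] at hx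
  by_cases hcase : x < 2 + (r-1)*(r-1)
  · -- in one of the first r-1 blocks
    set q := (x - 2) / (r-1) with hq
    have hr1 : 0 < r - 1 := by omega
    have hdm := Nat.div_add_mod (x-2) (r-1)
    have hmod := Nat.mod_lt (x-2) hr1
    refine ⟨q, ?_, ?_⟩
    · have : q < r - 1 := by
        rw [hq, Nat.div_lt_iff_lt_mul hr1]
        have : (r-1)*(r-1) = (r-1) * (r-1) := rfl
        calc x - 2 < (r-1)*(r-1) := by omega
        _ = (r-1) * (r-1) := rfl
      omega
    · have hqlt : q < r - 1 := by
        rw [hq, Nat.div_lt_iff_lt_mul hr1]; omega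
      rw [W_of_lt hqlt, Finset.mem_Ico]
      have he : (q+1) * (r-1) = q * (r-1) + (r-1) := by ring
      have hc : (r-1) * q = q * (r-1) := by ring
      rw [hc] at hdm
      constructor <;> omega
  · refine ⟨r-1, by omega, ?_⟩
    rw [W_last, Finset.mem_Ico]; omega

lemma mem_V_cases {r x : ℕ} (hr : 4 ≤ r) (hx : x ∈ V r) :
    x = 0 ∨ x = 1 ∨ ∃ i < r, x ∈ W r i := by
  by_cases h : 2 ≤ x
  · exact Or.inr (Or.inr (exists_mem_W hr hx h))
  · omega

lemma card_V (r : ℕ) : (V r).card = nV r := by simp [V]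

lemma sum_card_W (r : ℕ) (hr : 4 ≤ r) :
    ∑ i ∈ Finset.range r, (W r i).card = (r-1)*(r-1) + r := by
  have h : r = (r-1) + 1 := by omega
  rw [h, Finset.sum_range_succ]
  have h1 : ∀ i ∈ Finset.range (r-1), (W ((r-1)+1) i).card = r - 1 := by
    intro i hi
    rw [Finset.mem_range] at hi
    rw [← h]
    exact card_W_of_lt hr hi
  rw [Finset.sum_congr rfl h1, Finset.sum_const, Finset.card_range, ← h, card_W_last]
  simp [Nat.smul_one_eq_cast]


/-- the edge set -/
def E (r : ℕ) : Finset (Finset ℕ) :=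
  (Finset.powersetCard r (V r)).filter
    (fun e => e ≠ W r (r-1) ∧ ∃ i ∈ Finset.range r, 2 ≤ (e ∩ W r i).card)

lemma mem_E {r : ℕ} {e : Finset ℕ} :
    e ∈ E r ↔ e ⊆ V r ∧ e.card = r ∧ e ≠ W r (r-1) ∧ ∃ i < r, 2 ≤ (e ∩ W r i).card := by
  simp only [E, Finset.mem_filter, Finset.mem_powersetCard, Finset.mem_range]
  tauto

def WS (r : ℕ) : Finset (Finset ℕ) := (Finset.range r).image (W r)

def P2 (r : ℕ) : Finset (Finset ℕ) := insert {0} (insert {1} (WS r))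

def P1 (r : ℕ) : Finset (Finset ℕ) := insert ({0,1} : Finset ℕ) (WS r)

lemma mem_WS {r : ℕ} {C : Finset ℕ} : C ∈ WS r ↔ ∃ i < r, W r i = C := by
  simp [WS]

lemma W_injOn {r : ℕ} (hr : 4 ≤ r) {i j : ℕ} (hi : i < r) (hj : j < r)
    (h : W r i = W r j) : i = j := by
  by_contra hij
  have hd := W_disjoint hr hi hj hij
  obtain ⟨x, hx⟩ := W_nonempty hr hi
  exact (Finset.disjoint_left.1 hd) hx (h ▸ hx)

lemma card_WS {r : ℕ} (hr : 4 ≤ r) : (WS r).card = r := by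
  rw [WS, Finset.card_image_of_injOn, Finset.card_range]
  intro i hi j hj h
  exact W_injOn hr (Finset.mem_range.1 hi) (Finset.mem_range.1 hj) h

lemma notmem_WS_of_zero {r : ℕ} {C : Finset ℕ} (h0 : (0:ℕ) ∈ C) : C ∉ WS r := by
  intro h
  obtain ⟨i, _, hi⟩ := mem_WS.1 h
  exact zero_not_mem_W (hi ▸ h0)

lemma notmem_WS_of_one {r : ℕ} {C : Finset ℕ} (h0 : (1:ℕ) ∈ C) : C ∉ WS r := by
  intro h
  obtain ⟨i, _, hi⟩ := mem_WS.1 h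
  exact one_not_mem_W (hi ▸ h0)

lemma card_P1 {r : ℕ} (hr : 4 ≤ r) : (P1 r).card = r + 1 := by
  rw [P1, Finset.card_insert_of_notMem (notmem_WS_of_zero (by simp)), card_WS hr]

lemma card_P2 {r : ℕ} (hr : 4 ≤ r) : (P2 r).card = r + 2 := by
  rw [P2, Finset.card_insert_of_notMem, Finset.card_insert_of_notMem
    (notmem_WS_of_one (by simp)), card_WS hr]
  simp only [Finset.mem_insert]
  push_neg
  refine ⟨fun h => by have := Finset.singleton_injective h; omega, notmem_WS_of_zero (by simp)⟩

def H (r : ℕ) : BiHypergraph ℕ :=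
  ⟨V r, E r, fun e he => (mem_E.1 he).1⟩

lemma H_uniform (r : ℕ) : (H r).IsUniform r := fun e he => (mem_E.1 he).2.1


lemma mem_P2 {r : ℕ} {C : Finset ℕ} :
    C ∈ P2 r ↔ C = {0} ∨ C = {1} ∨ ∃ i < r, W r i = C := by
  simp [P2, mem_WS]

lemma mem_P1 {r : ℕ} {C : Finset ℕ} :
    C ∈ P1 r ↔ C = {0,1} ∨ ∃ i < r, W r i = C := by
  simp [P1, mem_WS]

lemma P2_disj {r : ℕ} (hr : 4 ≤ r) : ∀ C ∈ P2 r, ∀ D ∈ P2 r,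
    ∀ x, x ∈ C → x ∈ D → C = D := by
  intro C hC D hD x hxC hxD
  rcases mem_P2.1 hC with rfl | rfl | ⟨i, hi, rfl⟩ <;>
    rcases mem_P2.1 hD with rfl | rfl | ⟨j, hj, rfl⟩
  · rfl
  · simp at hxC hxD; omega
  · simp at hxC; subst hxC; exact absurd hxD zero_not_mem_W
  · simp at hxC hxD; omega
  · rfl
  · simp at hxC; subst hxC; exact absurd hxD one_not_mem_W
  · simp at hxD; subst hxD; exact absurd hxC zero_not_mem_W
  · simp at hxD; subst hxD; exact absurd hxC one_not_mem_W
  · by_contra hne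
    have hij : i ≠ j := fun h => hne (by rw [h])
    exact Finset.disjoint_left.1 (W_disjoint hr hi hj hij) hxC hxD

lemma P1_disj {r : ℕ} (hr : 4 ≤ r) : ∀ C ∈ P1 r, ∀ D ∈ P1 r,
    ∀ x, x ∈ C → x ∈ D → C = D := by
  intro C hC D hD x hxC hxD
  rcases mem_P1.1 hC with rfl | ⟨i, hi, rfl⟩ <;>
    rcases mem_P1.1 hD with rfl | ⟨j, hj, rfl⟩
  · rfl
  · simp at hxC
    rcases hxC with rfl | rfl
    · exact absurd hxD zero_not_mem_W
    · exact absurd hxD one_not_mem_W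
  · simp at hxD
    rcases hxD with rfl | rfl
    · exact absurd hxC zero_not_mem_W
    · exact absurd hxC one_not_mem_W
  · by_contra hne
    have hij : i ≠ j := fun h => hne (by rw [h])
    exact Finset.disjoint_left.1 (W_disjoint hr hi hj hij) hxC hxD

lemma edge_poly_core {r : ℕ} (hr : 4 ≤ r) {e : Finset ℕ} (he : e ∈ E r) :
    ∃ u ∈ e, ∃ v ∈ e, ∃ i < r, u ∈ W r i ∧ v ∉ W r i := by
  obtain ⟨hsub, hcard, hne, i, hi, h2⟩ := mem_E.1 he
  obtain ⟨u, hu⟩ : (e ∩ W r i).Nonempty := by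
    rw [← Finset.card_pos]; omega
  rw [Finset.mem_inter] at hu
  have : ¬ e ⊆ W r i := by
    intro hsub'
    rcases eq_or_ne i (r-1) with rfl | hir
    · exact hne (Finset.eq_of_subset_of_card_le hsub' (by rw [card_W_last, hcard]))
    · have := Finset.card_le_card hsub'
      rw [hcard, card_W_of_lt hr (by omega)] at this
      omega
  obtain ⟨v, hv, hv'⟩ := Finset.not_subset.1 this
  exact ⟨u, hu.1, v, hv, i, hi, hu.2, hv'⟩

lemma P2_strict {r : ℕ} (hr : 4 ≤ r) : (H r).IsStrictColoring (P2 r) := by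
  refine ⟨?_, ?_, ?_, ?_⟩
  · intro C hC
    rcases mem_P2.1 hC with rfl | rfl | ⟨i, hi, rfl⟩
    · simp
    · simp
    · exact W_nonempty hr hi
  · intro C hC
    rcases mem_P2.1 hC with rfl | rfl | ⟨i, hi, rfl⟩
    · intro x hx
      simp only [Finset.mem_singleton] at hx
      subst hx
      simp only [H, V, Finset.mem_range, nV]
      omega
    · intro x hx
      simp only [Finset.mem_singleton] at hx
      subst hx
      simp only [H, V, Finset.mem_range, nV]
      omega
    · exact W_subset_V hr hi
  · intro x hx
    have hx' : x ∈ V r := hx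
    have hex : ∃ C, C ∈ P2 r ∧ x ∈ C := by
      rcases mem_V_cases hr hx' with rfl | rfl | ⟨i, hi, hw⟩
      · exact ⟨{0}, mem_P2.2 (Or.inl rfl), by simp⟩
      · exact ⟨{1}, mem_P2.2 (Or.inr (Or.inl rfl)), by simp⟩
      · exact ⟨W r i, mem_P2.2 (Or.inr (Or.inr ⟨i, hi, rfl⟩)), hw⟩
    obtain ⟨C, hC, hxC⟩ := hex
    exact ⟨C, ⟨hC, hxC⟩, fun D ⟨hD, hxD⟩ => P2_disj hr D hD C hC x hxD hxC⟩
  · intro e he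
    obtain ⟨hsub, hcard, hne, i, hi, h2⟩ := mem_E.1 he
    constructor
    · exact ⟨W r i, mem_P2.2 (Or.inr (Or.inr ⟨i, hi, rfl⟩)), h2⟩
    · obtain ⟨u, hu, v, hv, j, hj, huW, hvW⟩ := edge_poly_core hr he
      have hvV : v ∈ V r := hsub hv
      have hWj : W r j ∈ P2 r := mem_P2.2 (Or.inr (Or.inr ⟨j, hj, rfl⟩))
      rcases mem_V_cases hr hvV with rfl | rfl | ⟨l, hl, hw⟩
      · refine ⟨u, hu, 0, hv, W r j, hWj, {0}, mem_P2.2 (Or.inl rfl), ?_, huW, by simp⟩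
        intro h
        have h0 : (0:ℕ) ∈ W r j := by rw [h]; simp
        exact zero_not_mem_W h0
      · refine ⟨u, hu, 1, hv, W r j, hWj, {1}, mem_P2.2 (Or.inr (Or.inl rfl)), ?_, huW, by simp⟩
        intro h
        have h0 : (1:ℕ) ∈ W r j := by rw [h]; simp
        exact one_not_mem_W h0
      · have hlj : l ≠ j := fun h => hvW (h ▸ hw)
        refine ⟨u, hu, v, hv, W r j, hWj,
          W r l, mem_P2.2 (Or.inr (Or.inr ⟨l, hl, rfl⟩)), ?_, huW, hw⟩
        intro h
        exact hlj (W_injOn hr hj hl h).symm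

lemma P1_strict {r : ℕ} (hr : 4 ≤ r) : (H r).IsStrictColoring (P1 r) := by
  refine ⟨?_, ?_, ?_, ?_⟩
  · intro C hC
    rcases mem_P1.1 hC with rfl | ⟨i, hi, rfl⟩
    · exact ⟨0, by simp⟩
    · exact W_nonempty hr hi
  · intro C hC
    rcases mem_P1.1 hC with rfl | ⟨i, hi, rfl⟩
    · intro x hx
      simp only [Finset.mem_insert, Finset.mem_singleton] at hx
      have : x < nV r := by rcases hx with rfl | rfl <;> simp [nV] <;> omega
      simpa [H, V] using this
    · exact W_subset_V hr hi
  · intro x hx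
    have hx' : x ∈ V r := hx
    have hex : ∃ C, C ∈ P1 r ∧ x ∈ C := by
      rcases mem_V_cases hr hx' with rfl | rfl | ⟨i, hi, hw⟩
      · exact ⟨{0,1}, mem_P1.2 (Or.inl rfl), by simp⟩
      · exact ⟨{0,1}, mem_P1.2 (Or.inl rfl), by simp⟩
      · exact ⟨W r i, mem_P1.2 (Or.inr ⟨i, hi, rfl⟩), hw⟩
    obtain ⟨C, hC, hxC⟩ := hex
    exact ⟨C, ⟨hC, hxC⟩, fun D ⟨hD, hxD⟩ => P1_disj hr D hD C hC x hxD hxC⟩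
  · intro e he
    obtain ⟨hsub, hcard, hne, i, hi, h2⟩ := mem_E.1 he
    constructor
    · exact ⟨W r i, mem_P1.2 (Or.inr ⟨i, hi, rfl⟩), h2⟩
    · obtain ⟨u, hu, v, hv, j, hj, huW, hvW⟩ := edge_poly_core hr he
      have hvV : v ∈ V r := hsub hv
      have hWj : W r j ∈ P1 r := mem_P1.2 (Or.inr ⟨j, hj, rfl⟩)
      rcases mem_V_cases hr hvV with rfl | rfl | ⟨l, hl, hw⟩
      · refine ⟨u, hu, 0, hv, W r j, hWj, {0,1}, mem_P1.2 (Or.inl rfl), ?_, huW, by simp⟩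
        intro h
        have h0 : (0:ℕ) ∈ W r j := by rw [h]; simp
        exact zero_not_mem_W h0
      · refine ⟨u, hu, 1, hv, W r j, hWj, {0,1}, mem_P1.2 (Or.inl rfl), ?_, huW, by simp⟩
        intro h
        have h0 : (0:ℕ) ∈ W r j := by rw [h]; simp
        exact zero_not_mem_W h0
      · have hlj : l ≠ j := fun h => hvW (h ▸ hw)
        refine ⟨u, hu, v, hv, W r j, hWj,
          W r l, mem_P1.2 (Or.inr ⟨l, hl, rfl⟩), ?_, huW, hw⟩
        intro h
        exact hlj (W_injOn hr hj hl h).symm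

section Rigid

variable {r : ℕ} {P : Finset (Finset ℕ)}

lemma class_eq (hP : (H r).IsStrictColoring P) {C D : Finset ℕ} {x : ℕ}
    (hC : C ∈ P) (hD : D ∈ P) (hxC : x ∈ C) (hxD : x ∈ D) : C = D := by
  have hx : x ∈ (H r).verts := hP.2.1 C hC hxC
  obtain ⟨U, _, hU⟩ := hP.2.2.1 x hx
  exact (hU C ⟨hC, hxC⟩).trans (hU D ⟨hD, hxD⟩).symm

lemma classes_disjoint (hP : (H r).IsStrictColoring P) {C D : Finset ℕ}
    (hC : C ∈ P) (hD : D ∈ P) (hCD : C ≠ D) : Disjoint C D := by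
  rw [Finset.disjoint_left]
  intro x hxC hxD
  exact hCD (class_eq hP hC hD hxC hxD)

lemma no_edge_sub (hP : (H r).IsStrictColoring P) {C : Finset ℕ} {e : Finset ℕ}
    (he : e ∈ E r) (hC : C ∈ P) (hsub : e ⊆ C) : False := by
  obtain ⟨x, hx, y, hy, C', hC', D', hD', hne, hxC', hyD'⟩ := (hP.2.2.2 e he).2
  have h1 : C' = C := class_eq hP hC' hC hxC' (hsub hx)
  have h2 : D' = C := class_eq hP hD' hC hyD' (hsub hy)
  exact hne (h1.trans h2.symm)

lemma partition_card (hP : (H r).IsStrictColoring P) {A : Finset ℕ} (hA : A ⊆ V r) :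
    A.card = ∑ C ∈ P, (A ∩ C).card := by
  have hbi : A = P.biUnion (fun C => A ∩ C) := by
    ext x
    simp only [Finset.mem_biUnion, Finset.mem_inter]
    constructor
    · intro hx
      obtain ⟨C, ⟨hC, hxC⟩, _⟩ := hP.2.2.1 x (hA hx)
      exact ⟨C, hC, hx, hxC⟩
    · rintro ⟨C, _, hx, _⟩; exact hx
  conv_lhs => rw [hbi]
  exact Finset.card_biUnion (fun C hC D hD hCD =>
    Finset.disjoint_left.2 fun x hx hx' =>
      Finset.disjoint_left.1 (classes_disjoint hP hC hD hCD)
        (Finset.mem_inter.1 hx).2 (Finset.mem_inter.1 hx').2)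

lemma card_triple (x y z : ℕ) : ({x, y, z} : Finset ℕ).card ≤ 3 := by
  apply le_trans (Finset.card_insert_le _ _)
  have := Finset.card_insert_le y ({z} : Finset ℕ)
  simp at this ⊢
  omega

/-- L2 : a class with two elements in a common block and at least `r` elements
must be the last block. -/
lemma class_large (hP : (H r).IsStrictColoring P) (hr : 4 ≤ r) {C : Finset ℕ}
    (hC : C ∈ P) {i : ℕ} (hi : i < r) (h2 : 2 ≤ (C ∩ W r i).card)
    (hcard : r ≤ C.card) : C = W r (r-1) := by
  obtain ⟨x, hx, y, hy, hxy⟩ := Finset.one_lt_card.1 (by omega : 1 < (C ∩ W r i).card)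
  rw [Finset.mem_inter] at hx hy
  rcases eq_or_ne i (r-1) with rfl | hir
  · -- i = r-1
    by_contra hne
    by_cases hsub : C ⊆ W r (r-1)
    · exact hne (Finset.eq_of_subset_of_card_le hsub (by rw [card_W_last]; omega))
    · obtain ⟨z, hz, hz'⟩ := Finset.not_subset.1 hsub
      have hzx : z ≠ x := fun h => hz' (h ▸ hx.2)
      have hzy : z ≠ y := fun h => hz' (h ▸ hy.2)
      obtain ⟨T, hT, hTcard⟩ := Finset.exists_subset_card_eq (s := C \ {x, y, z}) (n := r - 3)
        (by
          have h1 := Finset.le_card_sdiff ({x, y, z} : Finset ℕ) C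
          have h3 := card_triple x y z
          omega)
      have hxT : x ∉ T := fun h => by simpa using (Finset.mem_sdiff.1 (hT h)).2
      have hyT : y ∉ T := fun h => (Finset.mem_sdiff.1 (hT h)).2 (by simp)
      have hzT : z ∉ T := fun h => (Finset.mem_sdiff.1 (hT h)).2 (by simp)
      set e : Finset ℕ := insert x (insert y (insert z T)) with hedef
      have hyzT : y ∉ insert z T := by
        simp only [Finset.mem_insert]
        push_neg
        exact ⟨fun h => hzy h.symm, hyT⟩
      have hxyzT : x ∉ insert y (insert z T) := by
        simp only [Finset.mem_insert]
        push_neg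
        exact ⟨hxy, fun h => hzx h.symm, hxT⟩
      have hcarde : e.card = r := by
        rw [hedef, Finset.card_insert_of_notMem hxyzT,
          Finset.card_insert_of_notMem hyzT,
          Finset.card_insert_of_notMem hzT, hTcard]
        omega
      have hesub : e ⊆ C := by
        rw [hedef]
        apply Finset.insert_subset hx.1
        apply Finset.insert_subset hy.1
        apply Finset.insert_subset hz
        exact hT.trans (Finset.sdiff_subset)
      have he : e ∈ E r := by
        rw [mem_E]
        refine ⟨hesub.trans (hP.2.1 C hC), hcarde, ?_, r-1, by omega, ?_⟩
        · intro h
          exact hz' (h ▸ (by simp [hedef] : z ∈ e))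
        · refine Finset.one_lt_card.2 ⟨x, ?_, y, ?_, hxy⟩
          · exact Finset.mem_inter.2 ⟨by simp [hedef], hx.2⟩
          · exact Finset.mem_inter.2 ⟨by simp [hedef], hy.2⟩
      exact (no_edge_sub hP he hC hesub).elim
  · -- i < r-1 : contradiction
    exfalso
    obtain ⟨T, hT, hTcard⟩ := Finset.exists_subset_card_eq (s := C \ {x, y}) (n := r - 2)
      (by
        have h1 := Finset.le_card_sdiff ({x, y} : Finset ℕ) C
        have h3 : ({x,y} : Finset ℕ).card ≤ 2 := by
          apply le_trans (Finset.card_insert_le _ _); simp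
        omega)
    have hxT : x ∉ T := fun h => (Finset.mem_sdiff.1 (hT h)).2 (by simp)
    have hyT : y ∉ T := fun h => (Finset.mem_sdiff.1 (hT h)).2 (by simp)
    set e : Finset ℕ := insert x (insert y T) with hedef
    have hxyT : x ∉ insert y T := by
      simp only [Finset.mem_insert]; push_neg; exact ⟨hxy, hxT⟩
    have hcarde : e.card = r := by
      rw [hedef, Finset.card_insert_of_notMem hxyT, Finset.card_insert_of_notMem hyT, hTcard]
      omega
    have hesub : e ⊆ C := by
      rw [hedef]
      apply Finset.insert_subset hx.1
      apply Finset.insert_subset hy.1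
      exact hT.trans (Finset.sdiff_subset)
    have he : e ∈ E r := by
      rw [mem_E]
      refine ⟨hesub.trans (hP.2.1 C hC), hcarde, ?_, i, hi, ?_⟩
      · intro h
        have hxe : x ∈ W r (r-1) := h ▸ (by simp [hedef] : x ∈ e)
        exact Finset.disjoint_left.1 (W_disjoint hr hi (by omega) hir) hx.2 hxe
      · refine Finset.one_lt_card.2 ⟨x, ?_, y, ?_, hxy⟩
        · exact Finset.mem_inter.2 ⟨by simp [hedef], hx.2⟩
        · exact Finset.mem_inter.2 ⟨by simp [hedef], hy.2⟩
    exact no_edge_sub hP he hC hesub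

end Rigid

section Mass

variable {r : ℕ} {P : Finset (Finset ℕ)}

lemma class_W_sum (hP : (H r).IsStrictColoring P) (hr : 4 ≤ r) {C : Finset ℕ}
    (hC : C ∈ P) : ∑ i ∈ Finset.range r, (W r i ∩ C).card ≤ r := by
  by_cases hone : ∀ i ∈ Finset.range r, (W r i ∩ C).card ≤ 1
  · calc ∑ i ∈ Finset.range r, (W r i ∩ C).card ≤ ∑ _i ∈ Finset.range r, 1 :=
      Finset.sum_le_sum hone
    _ = r := by simp
  · push_neg at hone
    obtain ⟨i, hi, h2⟩ := hone
    rw [Finset.mem_range] at hi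
    have h2' : 2 ≤ (C ∩ W r i).card := by rwa [Finset.inter_comm]
    -- the sum is at most |C|
    have hsum : ∑ i ∈ Finset.range r, (W r i ∩ C).card ≤ C.card := by
      have hbi : ((Finset.range r).biUnion (fun i => W r i ∩ C)) ⊆ C := by
        intro x hx
        obtain ⟨j, _, hj⟩ := Finset.mem_biUnion.1 hx
        exact (Finset.mem_inter.1 hj).2
      have hdisj : ∀ a ∈ Finset.range r, ∀ b ∈ Finset.range r, a ≠ b →
          Disjoint (W r a ∩ C) (W r b ∩ C) := by
        intro a ha b hb hab
        rw [Finset.mem_range] at ha hb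
        exact Finset.disjoint_left.2 fun x hx hx' =>
          Finset.disjoint_left.1 (W_disjoint hr ha hb hab)
            (Finset.mem_inter.1 hx).1 (Finset.mem_inter.1 hx').1
      calc ∑ i ∈ Finset.range r, (W r i ∩ C).card
          = ((Finset.range r).biUnion (fun i => W r i ∩ C)).card :=
            (Finset.card_biUnion hdisj).symm
        _ ≤ C.card := Finset.card_le_card hbi
    by_cases hlarge : r ≤ C.card
    · have hCW := class_large hP hr hC hi h2' hlarge
      have : C.card = r := by rw [hCW, card_W_last]
      omega
    · omega

lemma card_P_ge (hP : (H r).IsStrictColoring P) (hr : 4 ≤ r) : r ≤ P.card := by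
  have hmass : (r-1)*(r-1) + r = ∑ C ∈ P, ∑ i ∈ Finset.range r, (W r i ∩ C).card := by
    rw [← sum_card_W r hr]
    rw [Finset.sum_comm]
    apply Finset.sum_congr rfl
    intro i hi
    exact partition_card hP (W_subset_V hr (Finset.mem_range.1 hi))
  have hub : ∑ C ∈ P, ∑ i ∈ Finset.range r, (W r i ∩ C).card ≤ P.card * r := by
    calc ∑ C ∈ P, ∑ i ∈ Finset.range r, (W r i ∩ C).card ≤ ∑ _C ∈ P, r :=
      Finset.sum_le_sum (fun C hC => class_W_sum hP hr hC)
    _ = P.card * r := by rw [Finset.sum_const, smul_eq_mul]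
  by_contra hlt
  push_neg at hlt
  have h1 : P.card * r ≤ (r-1) * r := Nat.mul_le_mul_right r (by omega)
  obtain ⟨s, rfl⟩ : ∃ s, r = s + 1 := ⟨r-1, by omega⟩
  simp only [Nat.add_sub_cancel] at hmass h1
  have h2 : s * (s+1) = s*s + s := by ring
  omega

end Mass

section Mono

variable {r : ℕ} {P : Finset (Finset ℕ)}

lemma W_mono (hP : (H r).IsStrictColoring P) (hr : 4 ≤ r) (hk : r ≤ P.card)
    {i : ℕ} (hi : i < r) (hilast : i = r-1 → r+1 ≤ P.card)
    {x y : ℕ} (hx : x ∈ W r i) (hy : y ∈ W r i)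
    {C D : Finset ℕ} (hC : C ∈ P) (hD : D ∈ P) (hxC : x ∈ C) (hyD : y ∈ D) :
    C = D := by
  by_contra hCD
  have hxy : x ≠ y := fun h => hCD (class_eq hP hC hD hxC (h ▸ hyD))
  -- representative function
  set rep : Finset ℕ → ℕ := fun Z => if h : Z.Nonempty then Z.min' h else 0 with hrepdef
  have hrep : ∀ Z ∈ P, rep Z ∈ Z := by
    intro Z hZ
    have hne := hP.1 Z hZ
    rw [hrepdef]
    simp only [dif_pos hne]
    exact Finset.min'_mem _ _
  -- cardinality of P minus two classes
  have hCDsub : ({C, D} : Finset (Finset ℕ)) ⊆ P := by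
    intro Z hZ; simp at hZ; rcases hZ with rfl | rfl <;> assumption
  have hCDcard : ({C, D} : Finset (Finset ℕ)).card = 2 := by
    rw [Finset.card_insert_of_notMem (by simpa using hCD), Finset.card_singleton]
  have hPCD : (P \ {C, D}).card = P.card - 2 := by
    rw [Finset.card_sdiff_of_subset hCDsub, hCDcard]
  -- special class with a representative avoiding the last block if necessary
  have claim : ∃ Z₀ ∈ P \ ({C, D} : Finset (Finset ℕ)), ∃ z₀ ∈ Z₀,
      (i = r-1 → z₀ ∉ W r (r-1)) := by
    rcases eq_or_ne i (r-1) with rfl | hir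
    · have hk' := hilast rfl
      by_contra hcl
      push_neg at hcl
      have hall : ∀ Z ∈ P \ ({C, D} : Finset (Finset ℕ)), Z ⊆ W r (r-1) \ {x, y} := by
        intro Z hZ z hz
        have hzW := (hcl Z hZ z hz).2
        rw [Finset.mem_sdiff]
        have hZP : Z ∈ P := (Finset.mem_sdiff.1 hZ).1
        have hZCD := (Finset.mem_sdiff.1 hZ).2
        simp only [Finset.mem_insert, Finset.mem_singleton] at hZCD
        push_neg at hZCD
        refine ⟨hzW, ?_⟩
        simp only [Finset.mem_insert, Finset.mem_singleton]
        push_neg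
        constructor
        · intro h; exact hZCD.1 (class_eq hP hZP hC (h ▸ hz) hxC)
        · intro h; exact hZCD.2 (class_eq hP hZP hD (h ▸ hz) hyD)
      -- counting contradiction
      have hxyW : ({x, y} : Finset ℕ) ⊆ W r (r-1) := by
        intro z hz; simp at hz; rcases hz with rfl | rfl <;> assumption
      have hcardWxy : (W r (r-1) \ {x, y}).card = r - 2 := by
        rw [Finset.card_sdiff_of_subset hxyW, card_W_last]
        have : ({x,y} : Finset ℕ).card = 2 := by
          rw [Finset.card_insert_of_notMem (by simpa using hxy), Finset.card_singleton]
        omega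
      have hsum : ∑ Z ∈ P \ ({C, D} : Finset (Finset ℕ)), Z.card ≤ r - 2 := by
        have hdisj : ∀ a ∈ P \ ({C, D} : Finset (Finset ℕ)),
            ∀ b ∈ P \ ({C, D} : Finset (Finset ℕ)), a ≠ b → Disjoint a b := by
          intro a ha b hb hab
          exact classes_disjoint hP (Finset.mem_sdiff.1 ha).1 (Finset.mem_sdiff.1 hb).1 hab
        calc ∑ Z ∈ P \ ({C, D} : Finset (Finset ℕ)), Z.card
            = ((P \ ({C, D} : Finset (Finset ℕ))).biUnion id).card :=
              (Finset.card_biUnion hdisj).symm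
          _ ≤ (W r (r-1) \ {x, y}).card := by
              apply Finset.card_le_card
              intro z hz
              obtain ⟨Z, hZ, hzZ⟩ := Finset.mem_biUnion.1 hz
              exact hall Z hZ hzZ
          _ = r - 2 := hcardWxy
      have hlb : (P \ ({C, D} : Finset (Finset ℕ))).card ≤
          ∑ Z ∈ P \ ({C, D} : Finset (Finset ℕ)), Z.card := by
        calc (P \ ({C, D} : Finset (Finset ℕ))).card
            = ∑ _Z ∈ P \ ({C, D} : Finset (Finset ℕ)), 1 := by simp
          _ ≤ _ := Finset.sum_le_sum (fun Z hZ => by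
              have := hP.1 Z (Finset.mem_sdiff.1 hZ).1
              rwa [← Finset.card_pos] at this)
      omega
    · have : 0 < (P \ ({C, D} : Finset (Finset ℕ))).card := by omega
      obtain ⟨Z₀, hZ₀⟩ := Finset.card_pos.1 this
      exact ⟨Z₀, hZ₀, rep Z₀, hrep Z₀ (Finset.mem_sdiff.1 hZ₀).1, fun h => absurd h hir⟩
  obtain ⟨Z₀, hZ₀mem, z₀, hz₀, hz₀W⟩ := claim
  have hZ₀P : Z₀ ∈ P := (Finset.mem_sdiff.1 hZ₀mem).1
  have hZ₀CD : Z₀ ≠ C ∧ Z₀ ≠ D := by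
    have := (Finset.mem_sdiff.1 hZ₀mem).2
    simp only [Finset.mem_insert, Finset.mem_singleton] at this
    push_neg at this
    exact this
  -- pick r-3 further classes
  obtain ⟨Q'', hQ''sub, hQ''card⟩ :=
    Finset.exists_subset_card_eq (s := (P \ ({C, D} : Finset (Finset ℕ))) \ {Z₀}) (n := r - 3)
      (by
        have h1 := Finset.le_card_sdiff ({Z₀} : Finset (Finset ℕ)) (P \ ({C, D} : Finset (Finset ℕ)))
        simp only [Finset.card_singleton] at h1
        omega)
  set Q' : Finset (Finset ℕ) := insert Z₀ Q'' with hQ'def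
  have hZ₀Q'' : Z₀ ∉ Q'' := fun h => by
    have := (Finset.mem_sdiff.1 (hQ''sub h)).2; simp at this
  have hQ'card : Q'.card = r - 2 := by
    rw [hQ'def, Finset.card_insert_of_notMem hZ₀Q'', hQ''card]; omega
  have hQ'sub : Q' ⊆ P \ ({C, D} : Finset (Finset ℕ)) := by
    rw [hQ'def]
    apply Finset.insert_subset hZ₀mem
    exact hQ''sub.trans (Finset.sdiff_subset)
  -- modified representative
  set rep' : Finset ℕ → ℕ := fun Z => if Z = Z₀ then z₀ else rep Z with hrep'def
  have hrep' : ∀ Z ∈ P, rep' Z ∈ Z := by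
    intro Z hZ
    rw [hrep'def]
    by_cases h : Z = Z₀
    · simp only [if_pos h]; exact h ▸ hz₀
    · simp only [if_neg h]; exact hrep Z hZ
  have hinj : ∀ Z1 ∈ P, ∀ Z2 ∈ P, rep' Z1 = rep' Z2 → Z1 = Z2 := by
    intro Z1 h1 Z2 h2 heq
    exact class_eq hP h1 h2 (hrep' Z1 h1) (heq ▸ hrep' Z2 h2)
  set S : Finset ℕ := Q'.image rep' with hSdef
  have hQ'P : Q' ⊆ P := hQ'sub.trans (Finset.sdiff_subset)
  have hScard : S.card = r - 2 := by
    rw [hSdef, Finset.card_image_of_injOn, hQ'card]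
    intro Z1 h1 Z2 h2 heq
    exact hinj Z1 (hQ'P h1) Z2 (hQ'P h2) heq
  have hmemS : ∀ s ∈ S, ∃ Z ∈ Q', rep' Z = s := by
    intro s hs
    obtain ⟨Z, hZ, hZs⟩ := Finset.mem_image.1 hs
    exact ⟨Z, hZ, hZs⟩
  have hnotCD : ∀ Z ∈ Q', Z ≠ C ∧ Z ≠ D := by
    intro Z hZ
    have := (Finset.mem_sdiff.1 (hQ'sub hZ)).2
    simp only [Finset.mem_insert, Finset.mem_singleton] at this
    push_neg at this
    exact this
  have hxS : x ∉ S := by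
    intro h
    obtain ⟨Z, hZ, hZx⟩ := hmemS x h
    have : Z = C := class_eq hP (hQ'P hZ) hC (hZx ▸ hrep' Z (hQ'P hZ)) hxC
    exact (hnotCD Z hZ).1 this
  have hyS : y ∉ S := by
    intro h
    obtain ⟨Z, hZ, hZy⟩ := hmemS y h
    have : Z = D := class_eq hP (hQ'P hZ) hD (hZy ▸ hrep' Z (hQ'P hZ)) hyD
    exact (hnotCD Z hZ).2 this
  set e : Finset ℕ := insert x (insert y S) with hedef
  have hxyS : x ∉ insert y S := by
    simp only [Finset.mem_insert]; push_neg; exact ⟨hxy, hxS⟩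
  have hcarde : e.card = r := by
    rw [hedef, Finset.card_insert_of_notMem hxyS, Finset.card_insert_of_notMem hyS, hScard]
    omega
  have hesubV : e ⊆ V r := by
    rw [hedef]
    apply Finset.insert_subset (W_subset_V hr hi hx)
    apply Finset.insert_subset (W_subset_V hr hi hy)
    intro s hs
    obtain ⟨Z, hZ, hZs⟩ := hmemS s hs
    exact hP.2.1 Z (hQ'P hZ) (hZs ▸ hrep' Z (hQ'P hZ))
  have hz₀S : z₀ ∈ S := by
    rw [hSdef]
    apply Finset.mem_image.2
    exact ⟨Z₀, by simp [hQ'def], by rw [hrep'def]; simp⟩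
  have he : e ∈ E r := by
    rw [mem_E]
    refine ⟨hesubV, hcarde, ?_, i, hi, ?_⟩
    · intro h
      rcases eq_or_ne i (r-1) with rfl | hir
      · exact hz₀W rfl (h ▸ (by simp [hedef, hz₀S] : z₀ ∈ e))
      · have hxW : x ∈ W r (r-1) := h ▸ (by simp [hedef] : x ∈ e)
        exact Finset.disjoint_left.1 (W_disjoint hr hi (by omega) hir) hx hxW
    · refine Finset.one_lt_card.2 ⟨x, ?_, y, ?_, hxy⟩
      · exact Finset.mem_inter.2 ⟨by simp [hedef], hx⟩
      · exact Finset.mem_inter.2 ⟨by simp [hedef], hy⟩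
  obtain ⟨Z, hZ, h2Z⟩ := (hP.2.2.2 e he).1
  obtain ⟨u, hu, v, hv, huv⟩ := Finset.one_lt_card.1 (by omega : 1 < (e ∩ Z).card)
  rw [Finset.mem_inter] at hu hv
  have hclass : ∀ w ∈ e, ∀ Zw ∈ P, w ∈ Zw →
      (w = x ∧ Zw = C) ∨ (w = y ∧ Zw = D) ∨ (∃ Z' ∈ Q', w = rep' Z' ∧ Zw = Z') := by
    intro w hw Zw hZw hwZw
    rw [hedef] at hw
    simp only [Finset.mem_insert] at hw
    rcases hw with rfl | rfl | hwS
    · exact Or.inl ⟨rfl, class_eq hP hZw hC hwZw hxC⟩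
    · exact Or.inr (Or.inl ⟨rfl, class_eq hP hZw hD hwZw hyD⟩)
    · obtain ⟨Z', hZ', hZ'w⟩ := hmemS w hwS
      exact Or.inr (Or.inr ⟨Z', hZ', hZ'w.symm,
        class_eq hP hZw (hQ'P hZ') hwZw (hZ'w ▸ hrep' Z' (hQ'P hZ'))⟩)
  have hcu := hclass u hu.1 Z hZ hu.2
  have hcv := hclass v hv.1 Z hZ hv.2
  rcases hcu with ⟨rfl, hZC⟩ | ⟨rfl, hZD⟩ | ⟨Z1, hZ1, hu1, hZ1eq⟩ <;>
    rcases hcv with ⟨rfl, h1⟩ | ⟨rfl, h1⟩ | ⟨Z2, hZ2, hv2, h1⟩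
  · exact huv rfl
  · exact hCD (hZC.symm.trans h1)
  · exact (hnotCD Z2 hZ2).1 (h1.symm.trans hZC)
  · exact hCD (h1.symm.trans hZD)
  · exact huv rfl
  · exact (hnotCD Z2 hZ2).2 (h1.symm.trans hZD)
  · exact (hnotCD Z1 hZ1).1 (hZ1eq.symm.trans h1)
  · exact (hnotCD Z1 hZ1).2 (hZ1eq.symm.trans h1)
  · exact huv (by rw [hu1, hv2, hZ1eq.symm.trans h1])

end Mono

section Classify

variable {r : ℕ} {P : Finset (Finset ℕ)}

lemma W_in_P (hP : (H r).IsStrictColoring P) (hr : 4 ≤ r) (hk : r ≤ P.card)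
    {i : ℕ} (hi : i < r) (hilast : i = r-1 → r+1 ≤ P.card) : W r i ∈ P := by
  obtain ⟨x₀, hx₀⟩ := W_nonempty hr hi
  obtain ⟨C, ⟨hC, hx₀C⟩, _⟩ := hP.2.2.1 x₀ (W_subset_V hr hi hx₀)
  have hsub : W r i ⊆ C := by
    intro y hy
    obtain ⟨D, ⟨hD, hyD⟩, _⟩ := hP.2.2.1 y (W_subset_V hr hi hy)
    have := W_mono hP hr hk hi hilast hy hx₀ hD hC hyD hx₀C
    exact this ▸ hyD
  by_cases hlarge : r ≤ C.card
  · have h2 : 2 ≤ (C ∩ W r i).card := by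
      have hsub2 : W r i ⊆ C ∩ W r i := fun z hz => Finset.mem_inter.2 ⟨hsub hz, hz⟩
      have := Finset.card_le_card hsub2
      rcases eq_or_ne i (r-1) with rfl | hir
      · rw [card_W_last] at this; omega
      · rw [card_W_of_lt hr (by omega)] at this; omega
    have hCW := class_large hP hr hC hi h2 hlarge
    rcases eq_or_ne i (r-1) with rfl | hir
    · exact hCW ▸ hC
    · exfalso
      have hx₀W : x₀ ∈ W r (r-1) := hCW ▸ hx₀C
      exact Finset.disjoint_left.1 (W_disjoint hr hi (by omega) hir) hx₀ hx₀W
  · rcases eq_or_ne i (r-1) with rfl | hir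
    · have := Finset.card_le_card hsub
      rw [card_W_last] at this
      omega
    · have hcle := Finset.card_le_card hsub
      rw [card_W_of_lt hr (by omega)] at hcle
      have := Finset.eq_of_subset_of_card_le hsub
        (by rw [card_W_of_lt hr (by omega : i < r - 1)]; omega)
      exact this ▸ hC

lemma zero_mem_V {r : ℕ} : (0:ℕ) ∈ V r := by
  simp only [V, Finset.mem_range, nV]; omega

lemma one_mem_V {r : ℕ} : (1:ℕ) ∈ V r := by
  simp only [V, Finset.mem_range, nV]; omega

lemma classify (hP : (H r).IsStrictColoring P) (hr : 4 ≤ r) : P = P1 r ∨ P = P2 r := by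
  have hk := card_P_ge hP hr
  have hWsmall : ∀ i, i < r - 1 → W r i ∈ P := fun i hi =>
    W_in_P hP hr hk (i := i) (by omega) (fun h => absurd h (by omega))
  have hkr : P.card ≠ r := by
    intro hkeq
    set WSm := (Finset.range (r-1)).image (W r) with hWSmdef
    have hWSmsub : WSm ⊆ P := by
      intro C hC
      obtain ⟨j, hj, hjC⟩ := Finset.mem_image.1 hC
      exact hjC ▸ hWsmall j (Finset.mem_range.1 hj)
    have hWSmcard : WSm.card = r - 1 := by
      rw [hWSmdef, Finset.card_image_of_injOn, Finset.card_range]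
      intro a ha b hb hab
      rw [Finset.mem_coe, Finset.mem_range] at ha hb
      exact W_injOn hr (by omega) (by omega) hab
    have hrest : (P \ WSm).card = 1 := by
      rw [Finset.card_sdiff_of_subset hWSmsub, hWSmcard]; omega
    obtain ⟨Z, hZeq⟩ := Finset.card_eq_one.1 hrest
    have hZP : Z ∈ P := by
      have : Z ∈ P \ WSm := hZeq ▸ Finset.mem_singleton_self Z
      exact (Finset.mem_sdiff.1 this).1
    have hmemZ : ∀ v, v ∈ V r → (∀ j, j < r-1 → v ∉ W r j) → v ∈ Z := by
      intro v hv hvW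
      obtain ⟨Cv, ⟨hCv, hvCv⟩, _⟩ := hP.2.2.1 v hv
      have hCvZ : Cv ∈ P \ WSm := by
        rw [Finset.mem_sdiff]
        refine ⟨hCv, ?_⟩
        intro hmem
        obtain ⟨j, hj, hjC⟩ := Finset.mem_image.1 hmem
        exact hvW j (Finset.mem_range.1 hj) (hjC ▸ hvCv)
      rw [hZeq, Finset.mem_singleton] at hCvZ
      exact hCvZ ▸ hvCv
    have hWlZ : W r (r-1) ⊆ Z := by
      intro w hw
      refine hmemZ w (W_subset_V hr (by omega) hw) ?_
      intro j hj hwj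
      exact Finset.disjoint_left.1 (W_disjoint hr (by omega) (by omega) (by omega)) hwj hw
    have h0Z : (0:ℕ) ∈ Z := hmemZ 0 zero_mem_V (fun j _ h => zero_not_mem_W h)
    have hZlarge : r ≤ Z.card := by
      have := Finset.card_le_card hWlZ
      rw [card_W_last] at this
      exact this
    have h2 : 2 ≤ (Z ∩ W r (r-1)).card := by
      have hsub2 : W r (r-1) ⊆ Z ∩ W r (r-1) := fun z hz => Finset.mem_inter.2 ⟨hWlZ hz, hz⟩
      have := Finset.card_le_card hsub2
      rw [card_W_last] at this
      omega
    have hZW := class_large hP hr hZP (by omega : r - 1 < r) h2 hZlarge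
    exact zero_not_mem_W (hZW ▸ h0Z)
  have hk1 : r + 1 ≤ P.card := by omega
  have hWall : ∀ i, i < r → W r i ∈ P := fun i hi => W_in_P hP hr hk hi (fun _ => hk1)
  obtain ⟨C0, ⟨hC0, h0C0⟩, _⟩ := hP.2.2.1 0 zero_mem_V
  obtain ⟨C1, ⟨hC1, h1C1⟩, _⟩ := hP.2.2.1 1 one_mem_V
  have hC0sub : C0 ⊆ ({0,1} : Finset ℕ) := by
    intro z hz
    rcases mem_V_cases hr (hP.2.1 C0 hC0 hz) with rfl | rfl | ⟨j, hj, hw⟩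
    · simp
    · simp
    · have := class_eq hP hC0 (hWall j hj) hz hw
      exact absurd (this ▸ h0C0) zero_not_mem_W
  have hC1sub : C1 ⊆ ({0,1} : Finset ℕ) := by
    intro z hz
    rcases mem_V_cases hr (hP.2.1 C1 hC1 hz) with rfl | rfl | ⟨j, hj, hw⟩
    · simp
    · simp
    · have := class_eq hP hC1 (hWall j hj) hz hw
      exact absurd (this ▸ h1C1) one_not_mem_W
  have hPdec : P = insert C0 (insert C1 (WS r)) := by
    ext C
    constructor
    · intro hC
      obtain ⟨v, hv⟩ := hP.1 C hC
      have hvV := hP.2.1 C hC hv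
      simp only [Finset.mem_insert]
      rcases mem_V_cases hr hvV with rfl | rfl | ⟨j, hj, hw⟩
      · exact Or.inl (class_eq hP hC hC0 hv h0C0)
      · exact Or.inr (Or.inl (class_eq hP hC hC1 hv h1C1))
      · exact Or.inr (Or.inr (mem_WS.2 ⟨j, hj, (class_eq hP hC (hWall j hj) hv hw).symm⟩))
    · intro hC
      simp only [Finset.mem_insert] at hC
      rcases hC with rfl | rfl | hC
      · exact hC0
      · exact hC1
      · obtain ⟨j, hj, hjC⟩ := mem_WS.1 hC
        exact hjC ▸ hWall j hj
  by_cases hc : C0 = C1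
  · left
    have h1C0 : (1:ℕ) ∈ C0 := hc ▸ h1C1
    have hC0eq : C0 = ({0,1} : Finset ℕ) := by
      apply Finset.Subset.antisymm hC0sub
      intro z hz
      simp only [Finset.mem_insert, Finset.mem_singleton] at hz
      rcases hz with rfl | rfl
      · exact h0C0
      · exact h1C0
    rw [hPdec, ← hc, hC0eq, Finset.insert_idem]
    rfl
  · right
    have hC0eq : C0 = ({0} : Finset ℕ) := by
      apply Finset.Subset.antisymm
      · intro z hz
        have := hC0sub hz
        simp only [Finset.mem_insert, Finset.mem_singleton] at this ⊢
        rcases this with rfl | rfl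
        · rfl
        · exact absurd (class_eq hP hC0 hC1 hz h1C1) hc
      · simp [h0C0]
    have hC1eq : C1 = ({1} : Finset ℕ) := by
      apply Finset.Subset.antisymm
      · intro z hz
        have := hC1sub hz
        simp only [Finset.mem_insert, Finset.mem_singleton] at this ⊢
        rcases this with rfl | rfl
        · exact absurd (class_eq hP hC0 hC1 h0C0 hz) hc
        · rfl
      · simp [h1C1]
    rw [hPdec, hC0eq, hC1eq]
    rfl

end Classify

end Constr

theorem stmt11 (r : ℕ) (hr : 4 ≤ r) :
    ∃ H : BiHypergraph ℕ, H.IsUniform r ∧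
      H.verts.card = r * (r - 1) + 3 ∧
      H.IsOneRealization {r + 2, r + 1} := by
  refine ⟨Constr.H r, Constr.H_uniform r, by simp [Constr.H, Constr.V, Constr.nV], ?_, ?_⟩
  · -- feasible set
    ext k
    simp only [BiHypergraph.feasibleSet, Set.mem_setOf_eq, Finset.coe_insert,
      Set.mem_insert_iff, Finset.coe_singleton, Set.mem_singleton_iff]
    constructor
    · rintro ⟨P, hP, rfl⟩
      rcases Constr.classify hP hr with h | h
      · right; rw [h, Constr.card_P1 hr]
      · left; rw [h, Constr.card_P2 hr]
    · rintro (rfl | rfl)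
      · exact ⟨Constr.P2 r, Constr.P2_strict hr, Constr.card_P2 hr⟩
      · exact ⟨Constr.P1 r, Constr.P1_strict hr, Constr.card_P1 hr⟩
  · -- uniqueness
    intro P Q hPs hQs hcard
    rcases Constr.classify hPs hr with h1 | h1 <;> rcases Constr.classify hQs hr with h2 | h2
    · rw [h1, h2]
    · exfalso
      rw [h1, h2, Constr.card_P1 hr, Constr.card_P2 hr] at hcard
      omega
    · exfalso
      rw [h1, h2, Constr.card_P2 hr, Constr.card_P1 hr] at hcard
      omega
    · rw [h1, h2]
end

section
/- For every integer r ≥ 4, there exists an r-uniform bi-hypergraph with exactly (r − 1)^2 + 3 vertices which is a one-realization of {r + 1, r}. -/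
namespace OneR
open Finset

variable (r : ℕ)

def nn : ℕ := (r - 1) ^ 2 + 3
def V : Finset ℕ := Finset.range (nn r)
def Zs : Finset ℕ := Finset.Ico 2 (r + 2)
def pc (v : ℕ) : ℕ :=
  if v = 0 then 0 else if v = 1 then 1 else if v < r + 2 then 2 else 3 + (v - (r + 2)) / (r - 1)
def Kp (j : ℕ) : Finset ℕ := (V r).filter (fun v => pc r v = j)
def edges : Finset (Finset ℕ) :=
  ((V r).powersetCard r).filter
    (fun e => (∃ u ∈ e, ∃ v ∈ e, u ≠ v ∧ pc r u = pc r v) ∧ e ≠ Zs r)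

def H : BiHypergraph ℕ :=
  ⟨V r, edges r, fun e he => (Finset.mem_powersetCard.mp (Finset.mem_filter.mp he).1).1⟩

variable {r}

lemma mem_edges {e : Finset ℕ} :
    e ∈ edges r ↔ e ⊆ V r ∧ e.card = r ∧
      (∃ u ∈ e, ∃ v ∈ e, u ≠ v ∧ pc r u = pc r v) ∧ e ≠ Zs r := by
  simp only [edges, Finset.mem_filter, Finset.mem_powersetCard]
  tauto

lemma nn_eq (hr : 4 ≤ r) : nn r = (r - 1) * (r - 2) + r + 2 := by
  obtain ⟨s, rfl⟩ : ∃ s, r = s + 4 := ⟨r - 4, by omega⟩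
  have h1 : s + 4 - 1 = s + 3 := by omega
  have h2 : s + 4 - 2 = s + 2 := by omega
  rw [nn, h1, h2]
  ring

lemma mem_V {v : ℕ} : v ∈ V r ↔ v < nn r := Finset.mem_range

lemma mem_Zs {v : ℕ} : v ∈ Zs r ↔ 2 ≤ v ∧ v < r + 2 := Finset.mem_Ico

lemma Zs_card : (Zs r).card = r := by simp [Zs]

lemma Zs_subset_V (hr : 4 ≤ r) : Zs r ⊆ V r := by
  intro v hv
  rw [mem_Zs] at hv
  rw [mem_V, nn_eq hr]
  omega

lemma pc_eq_zero {v : ℕ} : pc r v = 0 ↔ v = 0 := by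
  unfold pc
  constructor
  · intro h
    split_ifs at h with h1 h2 h3 <;>
      first
      | exact h1
      | (exfalso; generalize (v - (r + 2)) / (r - 1) = d at h; omega)
  · rintro rfl
    simp

lemma pc_eq_one {v : ℕ} : pc r v = 1 ↔ v = 1 := by
  unfold pc
  constructor
  · intro h
    split_ifs at h with h1 h2 h3 <;>
      first
      | exact h2
      | (exfalso; generalize (v - (r + 2)) / (r - 1) = d at h; omega)
  · rintro rfl
    simp

lemma pc_eq_two {v : ℕ} : pc r v = 2 ↔ v ∈ Zs r := by
  rw [mem_Zs]
  unfold pc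
  constructor
  · intro h
    split_ifs at h with h1 h2 h3 <;>
      first
      | omega
      | (exfalso; generalize (v - (r + 2)) / (r - 1) = d at h; omega)
  · intro h
    split_ifs with h1 h2 h3 <;> first | omega | (exfalso; omega)

lemma pc_big {v : ℕ} (hv : r + 2 ≤ v) : pc r v = 3 + (v - (r + 2)) / (r - 1) := by
  unfold pc
  split_ifs <;> first | rfl | omega

lemma pc_le (hr : 4 ≤ r) {v : ℕ} (hv : v ∈ V r) : pc r v ≤ r := by
  rw [mem_V, nn_eq hr] at hv
  rcases Nat.lt_or_ge v (r + 2) with h | h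
  · unfold pc
    split_ifs <;> first | omega | (exfalso; omega)
  · rw [pc_big h]
    have h1 : (v - (r + 2)) / (r - 1) < r - 2 := by
      rw [Nat.div_lt_iff_lt_mul (by omega)]
      have : (r - 2) * (r - 1) = (r - 1) * (r - 2) := by ring
      omega
    omega

lemma Kp_of_big (hr : 4 ≤ r) {i : ℕ} (hi : i < r - 2) :
    Kp r (3 + i) = Finset.Ico (r + 2 + i * (r - 1)) (r + 2 + (i + 1) * (r - 1)) := by
  have hup : (i + 1) * (r - 1) ≤ (r - 2) * (r - 1) := Nat.mul_le_mul_right _ (by omega)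
  have hcomm : (r - 2) * (r - 1) = (r - 1) * (r - 2) := by ring
  ext v
  rw [Kp, Finset.mem_filter, mem_V, nn_eq hr, Finset.mem_Ico]
  constructor
  · rintro ⟨hvV, hpc⟩
    have hv2 : r + 2 ≤ v := by
      by_contra h
      unfold pc at hpc
      split_ifs at hpc <;> omega
    rw [pc_big hv2] at hpc
    have hdiv : (v - (r + 2)) / (r - 1) = i := by omega
    have h1 : i * (r - 1) ≤ v - (r + 2) := by
      have := Nat.le_div_iff_mul_le (k := r - 1) (x := i) (y := v - (r+2)) (by omega)
      omega
    have h2 : v - (r + 2) < (i + 1) * (r - 1) := by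
      have := Nat.div_lt_iff_lt_mul (k := r - 1) (x := v - (r+2)) (y := i + 1) (by omega)
      omega
    constructor <;> omega
  · rintro ⟨h1, h2⟩
    have hv2 : r + 2 ≤ v := by omega
    have hdiv : (v - (r + 2)) / (r - 1) = i := by
      have ha : i ≤ (v - (r + 2)) / (r - 1) := by
        rw [Nat.le_div_iff_mul_le (by omega : 0 < r - 1)]
        omega
      have hb : (v - (r + 2)) / (r - 1) < i + 1 := by
        rw [Nat.div_lt_iff_lt_mul (by omega : 0 < r - 1)]
        omega
      omega
    refine ⟨by omega, ?_⟩
    rw [pc_big hv2, hdiv]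

lemma Kp_zero (hr : 4 ≤ r) : Kp r 0 = {0} := by
  ext v
  simp only [Kp, Finset.mem_filter, mem_V, Finset.mem_singleton, pc_eq_zero]
  constructor
  · tauto
  · rintro rfl; exact ⟨by simp [nn], rfl⟩

lemma Kp_one (hr : 4 ≤ r) : Kp r 1 = {1} := by
  ext v
  simp only [Kp, Finset.mem_filter, mem_V, Finset.mem_singleton, pc_eq_one]
  constructor
  · tauto
  · rintro rfl; exact ⟨by simp [nn], rfl⟩

lemma Kp_two (hr : 4 ≤ r) : Kp r 2 = Zs r := by
  ext v
  simp only [Kp, Finset.mem_filter, pc_eq_two]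
  exact ⟨fun h => h.2, fun h => ⟨Zs_subset_V hr h, h⟩⟩

lemma Kp_card_big (hr : 4 ≤ r) {j : ℕ} (h3 : 3 ≤ j) (hj : j ≤ r) : (Kp r j).card = r - 1 := by
  obtain ⟨i, rfl⟩ : ∃ i, j = 3 + i := ⟨j - 3, by omega⟩
  rw [Kp_of_big hr (by omega), Nat.card_Ico]
  have : (i + 1) * (r - 1) = i * (r - 1) + (r - 1) := by ring
  omega

lemma Kp_card (hr : 4 ≤ r) {j : ℕ} (hj : j ≤ r) : 1 ≤ (Kp r j).card := by
  rcases Nat.lt_or_ge j 3 with h | h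
  · interval_cases j
    · rw [Kp_zero hr]; simp
    · rw [Kp_one hr]; simp
    · rw [Kp_two hr, Zs_card]; omega
  · rw [Kp_card_big hr h hj]; omega

lemma Kp_nonempty (hr : 4 ≤ r) {j : ℕ} (hj : j ≤ r) : (Kp r j).Nonempty :=
  Finset.card_pos.mp (Kp_card hr hj)

lemma mem_Kp {v j : ℕ} : v ∈ Kp r j ↔ v ∈ V r ∧ pc r v = j := Finset.mem_filter

lemma mem_Kp_pc {v : ℕ} (hv : v ∈ V r) : v ∈ Kp r (pc r v) := mem_Kp.mpr ⟨hv, rfl⟩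

lemma Kp_injOn (hr : 4 ≤ r) {j j' : ℕ} (hj : j ≤ r) (h : Kp r j = Kp r j') : j = j' := by
  obtain ⟨a, ha⟩ := Kp_nonempty hr hj
  have := h ▸ ha
  rw [mem_Kp] at ha this
  omega

lemma pc_eq_small (hr : 4 ≤ r) {u v : ℕ} (hu : u ∈ V r) (hv : v ∈ V r)
    (h : pc r u = pc r v) (h1 : pc r u ≤ 1) : u = v := by
  interval_cases hpc : pc r u
  · have hu0 : u = 0 := pc_eq_zero.mp hpc
    have hv0 : v = 0 := pc_eq_zero.mp h.symm
    omega
  · have hu0 : u = 1 := pc_eq_one.mp hpc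
    have hv0 : v = 1 := pc_eq_one.mp h.symm
    omega

lemma notMem_Zs_of_pc {v : ℕ} (h : pc r v ≠ 2) : v ∉ Zs r := fun hv => h (pc_eq_two.mpr hv)

end OneR

namespace OneR
open Finset

variable (r : ℕ)

def Pp : Finset (Finset ℕ) := (Finset.range (r + 1)).image (Kp r)
def Qq : Finset (Finset ℕ) := insert {0, 1} ((Finset.Ico 2 (r + 1)).image (Kp r))

variable {r}

lemma card_V : (V r).card = nn r := by simp [V]

lemma pc_ge_two {v : ℕ} (hv : 2 ≤ v) : 2 ≤ pc r v := by
  unfold pc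
  split_ifs <;> first | omega | (generalize (v - (r + 2)) / (r - 1) = d; omega)

lemma zero_mem_V : 0 ∈ V r := by
  rw [mem_V, nn]; omega

lemma one_mem_V : 1 ∈ V r := by
  rw [mem_V, nn]; omega

lemma pc_zero : pc r 0 = 0 := pc_eq_zero.mpr rfl
lemma pc_one : pc r 1 = 1 := pc_eq_one.mpr rfl

lemma zo_ne_Kp (hr : 4 ≤ r) {j : ℕ} (hj : 2 ≤ j) : ({0, 1} : Finset ℕ) ≠ Kp r j := by
  intro h
  have h0 : (0 : ℕ) ∈ Kp r j := h ▸ (by simp)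
  rw [mem_Kp, pc_zero] at h0
  omega

lemma card_Pp (hr : 4 ≤ r) : (Pp r).card = r + 1 := by
  rw [Pp, Finset.card_image_of_injOn, Finset.card_range]
  intro j hj j' hj' h
  exact Kp_injOn hr (by simp at hj; omega) h

lemma card_Qq (hr : 4 ≤ r) : (Qq r).card = r := by
  rw [Qq, Finset.card_insert_of_notMem, Finset.card_image_of_injOn, Nat.card_Ico]
  · omega
  · intro j hj j' hj' h
    simp only [Finset.mem_coe, Finset.mem_Ico] at hj
    exact Kp_injOn hr (by omega) h
  · intro hmem
    obtain ⟨j, hj, hKj⟩ := Finset.mem_image.mp hmem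
    simp only [Finset.mem_Ico] at hj
    exact zo_ne_Kp hr hj.1 hKj.symm

lemma e_not_sub_Kp (hr : 4 ≤ r) {e : Finset ℕ} (hec : e.card = r) (heZ : e ≠ Zs r)
    {j : ℕ} (hj : j ≤ r) (hsub : e ⊆ Kp r j) : False := by
  rcases Nat.lt_or_ge j 3 with h | h
  · interval_cases j
    · have := Finset.card_le_card hsub
      rw [Kp_zero hr] at this
      simp at this
      omega
    · have := Finset.card_le_card hsub
      rw [Kp_one hr] at this
      simp at this
      omega
    · rw [Kp_two hr] at hsub
      exact heZ (Finset.eq_of_subset_of_card_le hsub (by rw [Zs_card, hec]))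
  · have := Finset.card_le_card hsub
    rw [Kp_card_big hr h hj] at this
    omega

lemma strict_Pp (hr : 4 ≤ r) : (H r).IsStrictColoring (Pp r) := by
  refine ⟨?_, ?_, ?_, ?_⟩
  · rintro C hC
    obtain ⟨j, hj, rfl⟩ := Finset.mem_image.mp hC
    exact Kp_nonempty hr (by simp at hj; omega)
  · rintro C hC
    obtain ⟨j, hj, rfl⟩ := Finset.mem_image.mp hC
    exact Finset.filter_subset _ _
  · intro x hx
    refine ⟨Kp r (pc r x), ⟨Finset.mem_image.mpr ⟨pc r x,
      Finset.mem_range.mpr (by have := pc_le hr hx; omega), rfl⟩, mem_Kp_pc hx⟩, ?_⟩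
    rintro D ⟨hD, hxD⟩
    obtain ⟨j, hj, rfl⟩ := Finset.mem_image.mp hD
    rw [(mem_Kp.mp hxD).2]
  · intro e he
    obtain ⟨heV, hecard, ⟨u, hu, v, hv, huv, hpc⟩, heZ⟩ := mem_edges.mp he
    constructor
    · refine ⟨Kp r (pc r u), Finset.mem_image.mpr ⟨pc r u,
        Finset.mem_range.mpr (by have := pc_le hr (heV hu); omega), rfl⟩, ?_⟩
      have : 1 < (e ∩ Kp r (pc r u)).card := Finset.one_lt_card.mpr
        ⟨u, Finset.mem_inter.mpr ⟨hu, mem_Kp_pc (heV hu)⟩,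
         v, Finset.mem_inter.mpr ⟨hv, mem_Kp.mpr ⟨heV hv, hpc.symm⟩⟩, huv.symm ∘ Eq.symm⟩
      omega
    · have hne : ∃ a ∈ e, ∃ b ∈ e, pc r a ≠ pc r b := by
        by_contra hcon
        push_neg at hcon
        have hsub : e ⊆ Kp r (pc r u) :=
          fun a ha => mem_Kp.mpr ⟨heV ha, hcon a ha u hu⟩
        exact e_not_sub_Kp hr hecard heZ (pc_le hr (heV hu)) hsub
      obtain ⟨a, ha, b, hb, hab⟩ := hne
      refine ⟨a, ha, b, hb, Kp r (pc r a), Finset.mem_image.mpr ⟨pc r a,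
        Finset.mem_range.mpr (by have := pc_le hr (heV ha); omega), rfl⟩,
        Kp r (pc r b), Finset.mem_image.mpr ⟨pc r b,
        Finset.mem_range.mpr (by have := pc_le hr (heV hb); omega), rfl⟩,
        ?_, mem_Kp_pc (heV ha), mem_Kp_pc (heV hb)⟩
      intro h
      exact hab (Kp_injOn hr (pc_le hr (heV ha)) h)

lemma strict_Qq (hr : 4 ≤ r) : (H r).IsStrictColoring (Qq r) := by
  have hzoV : ({0, 1} : Finset ℕ) ⊆ V r := by
    intro a ha
    simp only [Finset.mem_insert, Finset.mem_singleton] at ha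
    rcases ha with rfl | rfl
    · exact zero_mem_V
    · exact one_mem_V
  refine ⟨?_, ?_, ?_, ?_⟩
  · rintro C hC
    rcases Finset.mem_insert.mp hC with rfl | hC
    · exact ⟨0, by simp⟩
    · obtain ⟨j, hj, rfl⟩ := Finset.mem_image.mp hC
      simp only [Finset.mem_Ico] at hj
      exact Kp_nonempty hr (by omega)
  · rintro C hC
    rcases Finset.mem_insert.mp hC with rfl | hC
    · exact hzoV
    · obtain ⟨j, hj, rfl⟩ := Finset.mem_image.mp hC
      exact Finset.filter_subset _ _
  · intro x hx
    rcases Nat.lt_or_ge x 2 with hx2 | hx2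
    · refine ⟨{0, 1}, ⟨Finset.mem_insert_self _ _, by simp; omega⟩, ?_⟩
      rintro D ⟨hD, hxD⟩
      rcases Finset.mem_insert.mp hD with rfl | hD
      · rfl
      · obtain ⟨j, hj, rfl⟩ := Finset.mem_image.mp hD
        simp only [Finset.mem_Ico] at hj
        have := (mem_Kp.mp hxD).2
        have hle : pc r x ≤ 1 := by
          interval_cases x
          · rw [pc_zero]; omega
          · rw [pc_one]
        omega
    · have hpcx : 2 ≤ pc r x := pc_ge_two hx2
      refine ⟨Kp r (pc r x), ⟨Finset.mem_insert_of_mem (Finset.mem_image.mpr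
        ⟨pc r x, Finset.mem_Ico.mpr ⟨hpcx, by have := pc_le hr hx; omega⟩, rfl⟩),
        mem_Kp_pc hx⟩, ?_⟩
      rintro D ⟨hD, hxD⟩
      rcases Finset.mem_insert.mp hD with rfl | hD
      · simp only [Finset.mem_insert, Finset.mem_singleton] at hxD
        omega
      · obtain ⟨j, hj, rfl⟩ := Finset.mem_image.mp hD
        rw [(mem_Kp.mp hxD).2]
  · intro e he
    obtain ⟨heV, hecard, ⟨u, hu, v, hv, huv, hpc⟩, heZ⟩ := mem_edges.mp he
    have hu2 : 2 ≤ pc r u := by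
      by_contra hcon
      exact huv (pc_eq_small hr (heV hu) (heV hv) hpc (by omega))
    constructor
    · refine ⟨Kp r (pc r u), Finset.mem_insert_of_mem (Finset.mem_image.mpr
        ⟨pc r u, Finset.mem_Ico.mpr ⟨hu2, by have := pc_le hr (heV hu); omega⟩, rfl⟩), ?_⟩
      have : 1 < (e ∩ Kp r (pc r u)).card := Finset.one_lt_card.mpr
        ⟨u, Finset.mem_inter.mpr ⟨hu, mem_Kp_pc (heV hu)⟩,
         v, Finset.mem_inter.mpr ⟨hv, mem_Kp.mpr ⟨heV hv, hpc.symm⟩⟩, huv.symm ∘ Eq.symm⟩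
      omega
    · -- find a poly pair for Qq
      by_cases hall : ∀ a ∈ e, 2 ≤ pc r a
      · -- all big classes; find two distinct pc values
        have hne : ∃ a ∈ e, ∃ b ∈ e, pc r a ≠ pc r b := by
          by_contra hcon
          push_neg at hcon
          exact e_not_sub_Kp hr hecard heZ (pc_le hr (heV hu))
            (fun a ha => mem_Kp.mpr ⟨heV ha, hcon a ha u hu⟩)
        obtain ⟨a, ha, b, hb, hab⟩ := hne
        refine ⟨a, ha, b, hb, Kp r (pc r a), Finset.mem_insert_of_mem (Finset.mem_image.mpr
          ⟨pc r a, Finset.mem_Ico.mpr ⟨hall a ha, by have := pc_le hr (heV ha); omega⟩, rfl⟩),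
          Kp r (pc r b), Finset.mem_insert_of_mem (Finset.mem_image.mpr
          ⟨pc r b, Finset.mem_Ico.mpr ⟨hall b hb, by have := pc_le hr (heV hb); omega⟩, rfl⟩),
          ?_, mem_Kp_pc (heV ha), mem_Kp_pc (heV hb)⟩
        intro h
        exact hab (Kp_injOn hr (pc_le hr (heV ha)) h)
      · push_neg at hall
        obtain ⟨a, ha, hpa⟩ := hall
        have ha01 : a ∈ ({0, 1} : Finset ℕ) := by
          rcases Nat.lt_or_ge a 2 with h2 | h2
          · simp only [Finset.mem_insert, Finset.mem_singleton]; omega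
          · exact absurd (pc_ge_two (r := r) h2) (by omega)
        refine ⟨a, ha, u, hu, {0, 1}, Finset.mem_insert_self _ _,
          Kp r (pc r u), Finset.mem_insert_of_mem (Finset.mem_image.mpr
          ⟨pc r u, Finset.mem_Ico.mpr ⟨hu2, by have := pc_le hr (heV hu); omega⟩, rfl⟩),
          zo_ne_Kp hr hu2, ha01, mem_Kp_pc (heV hu)⟩

end OneR

namespace OneR
open Finset

noncomputable def clR (R : Finset (Finset ℕ)) (v : ℕ) : Finset ℕ :=
  if h : ∃ C, C ∈ R ∧ v ∈ C then h.choose else ∅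

def rp (C : Finset ℕ) : ℕ := C.min.getD 0

lemma rp_mem {C : Finset ℕ} (h : C.Nonempty) : rp C ∈ C := by
  obtain ⟨a, ha⟩ := Finset.min_of_nonempty h
  rw [rp, ha]
  exact Finset.mem_of_min ha

variable {r : ℕ} {R : Finset (Finset ℕ)}

lemma H_verts : (H r).verts = V r := rfl
lemma H_edges : (H r).edges = edges r := rfl

lemma cl_spec (hcol : (H r).IsStrictColoring R) {v : ℕ} (hv : v ∈ V r) :
    clR R v ∈ R ∧ v ∈ clR R v := by
  have hex : ∃ C, C ∈ R ∧ v ∈ C := by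
    obtain ⟨C, hC, -⟩ := hcol.2.2.1 v hv
    exact ⟨C, hC⟩
  rw [clR, dif_pos hex]
  exact hex.choose_spec

lemma cl_eq (hcol : (H r).IsStrictColoring R) {v : ℕ} (hv : v ∈ V r)
    {C : Finset ℕ} (hC : C ∈ R) (hvC : v ∈ C) : C = clR R v := by
  obtain ⟨D, hD, huniq⟩ := hcol.2.2.1 v hv
  have h1 := huniq C ⟨hC, hvC⟩
  have h2 := huniq _ ⟨(cl_spec hcol hv).1, (cl_spec hcol hv).2⟩
  rw [h1, h2]

lemma indep (hcol : (H r).IsStrictColoring R) {C : Finset ℕ} (hC : C ∈ R)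
    {e : Finset ℕ} (he : e ∈ edges r) : ¬ e ⊆ C := by
  intro hsub
  obtain ⟨x, hx, y, hy, C', hC', D', hD', hne, hxC, hyD⟩ := (hcol.2.2.2 e he).2
  have hxV : x ∈ V r := (mem_edges.mp he).1 hx
  have hyV : y ∈ V r := (mem_edges.mp he).1 hy
  have h1 : C' = clR R x := cl_eq hcol hxV hC' hxC
  have h2 : C = clR R x := cl_eq hcol hxV hC (hsub hx)
  have h3 : D' = clR R y := cl_eq hcol hyV hD' hyD
  have h4 : C = clR R y := cl_eq hcol hyV hC (hsub hy)
  exact hne (by rw [h1, ← h2, h4, ← h3])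

lemma class_disj (hcol : (H r).IsStrictColoring R) {C D : Finset ℕ}
    (hC : C ∈ R) (hD : D ∈ R) (hne : C ≠ D) : Disjoint C D := by
  rw [Finset.disjoint_left]
  intro a haC haD
  have haV : a ∈ V r := hcol.2.1 C hC haC
  exact hne ((cl_eq hcol haV hC haC).trans (cl_eq hcol haV hD haD).symm)

lemma sum_card (hcol : (H r).IsStrictColoring R) : ∑ C ∈ R, C.card = nn r := by
  have hbU : R.biUnion id = V r := by
    apply Finset.Subset.antisymm
    · intro a ha
      obtain ⟨C, hC, haC⟩ := Finset.mem_biUnion.mp ha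
      exact hcol.2.1 C hC haC
    · intro a ha
      exact Finset.mem_biUnion.mpr ⟨clR R a, (cl_spec hcol ha).1, (cl_spec hcol ha).2⟩
  have := Finset.card_biUnion (fun C hC D hD hne => class_disj hcol hC hD hne)
    (s := R) (t := id)
  rw [hbU, card_V] at this
  exact this.symm

lemma rainbow_contra (hr : 4 ≤ r) (hcol : (H r).IsStrictColoring R) (hk : r ≤ R.card)
    {s : Finset ℕ} (hsV : s ⊆ V r) (hsc : s.card ≤ r)
    (hinj : ∀ a ∈ s, ∀ b ∈ s, a ≠ b → clR R a ≠ clR R b)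
    {u v w : ℕ} (hu : u ∈ s) (hv : v ∈ s) (hw : w ∈ s)
    (huv : u ≠ v) (hpc : pc r u = pc r v) (hwZ : w ∉ Zs r) : False := by
  classical
  set T := s.image (clR R) with hT
  have hTcard : T.card = s.card := Finset.card_image_of_injOn (fun a ha b hb hab => by
    by_contra hne
    exact hinj a ha b hb hne hab)
  have hTR : T ⊆ R := by
    intro C hC
    obtain ⟨a, ha, rfl⟩ := Finset.mem_image.mp hC
    exact (cl_spec hcol (hsV ha)).1
  have hsd : r - s.card ≤ (R \ T).card := by
    rw [Finset.card_sdiff_of_subset hTR]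
    omega
  obtain ⟨S, hSsub, hScard⟩ := Finset.exists_subset_card_eq hsd
  have hSmem : ∀ C ∈ S, C ∈ R ∧ C ∉ T := fun C hC => Finset.mem_sdiff.mp (hSsub hC)
  have hrpm : ∀ C ∈ S, rp C ∈ C := fun C hC => rp_mem (hcol.1 C (hSmem C hC).1)
  have hclrp : ∀ C ∈ S, clR R (rp C) = C := fun C hC =>
    (cl_eq hcol (hcol.2.1 C (hSmem C hC).1 (hrpm C hC)) (hSmem C hC).1 (hrpm C hC)).symm
  set e := s ∪ S.image rp with he
  have heV : e ⊆ V r := by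
    intro a ha
    rcases Finset.mem_union.mp ha with h | h
    · exact hsV h
    · obtain ⟨C, hC, rfl⟩ := Finset.mem_image.mp h
      exact hcol.2.1 C (hSmem C hC).1 (hrpm C hC)
  have hdisj : Disjoint s (S.image rp) := by
    rw [Finset.disjoint_right]
    intro a haim has
    obtain ⟨C, hC, hrp⟩ := Finset.mem_image.mp haim
    have hmem : clR R a ∈ T := Finset.mem_image_of_mem _ has
    rw [← hrp, hclrp C hC] at hmem
    exact (hSmem C hC).2 hmem
  have himcard : (S.image rp).card = S.card := Finset.card_image_of_injOn (by
    intro C hC D hD hCD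
    have h1 := hclrp C hC
    have h2 := hclrp D hD
    rw [← h1, ← h2, hCD])
  have hecard : e.card = r := by
    rw [he, Finset.card_union_of_disjoint hdisj, himcard, hScard]
    omega
  have hee : e ∈ edges r := mem_edges.mpr ⟨heV, hecard,
    ⟨u, Finset.mem_union_left _ hu, v, Finset.mem_union_left _ hv, huv, hpc⟩, by
      intro hEZ
      exact hwZ (hEZ ▸ Finset.mem_union_left _ hw)⟩
  have hclinj : ∀ a ∈ e, ∀ b ∈ e, a ≠ b → clR R a ≠ clR R b := by
    intro a ha b hb hab
    rcases Finset.mem_union.mp ha with ha' | ha' <;> rcases Finset.mem_union.mp hb with hb' | hb'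
    · exact hinj a ha' b hb' hab
    · obtain ⟨D, hD, rfl⟩ := Finset.mem_image.mp hb'
      rw [hclrp D hD]
      intro h
      exact (hSmem D hD).2 (h ▸ Finset.mem_image_of_mem _ ha')
    · obtain ⟨C, hC, rfl⟩ := Finset.mem_image.mp ha'
      rw [hclrp C hC]
      intro h
      exact (hSmem C hC).2 (h.symm ▸ Finset.mem_image_of_mem _ hb')
    · obtain ⟨C, hC, rfl⟩ := Finset.mem_image.mp ha'
      obtain ⟨D, hD, rfl⟩ := Finset.mem_image.mp hb'
      rw [hclrp C hC, hclrp D hD]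
      intro h
      exact hab (congrArg rp h)
  obtain ⟨C, hCR, hC2⟩ := (hcol.2.2.2 e hee).1
  obtain ⟨a, ha, b, hb, hab⟩ := Finset.one_lt_card.mp (by omega : 1 < (e ∩ C).card)
  have ha' := Finset.mem_inter.mp ha
  have hb' := Finset.mem_inter.mp hb
  exact hclinj a ha'.1 b hb'.1 hab
    (((cl_eq hcol (heV ha'.1) hCR ha'.2).symm).trans (cl_eq hcol (heV hb'.1) hCR hb'.2))

lemma edge_in (hr : 4 ≤ r) {C : Finset ℕ} (hC : C ⊆ V r) (hc : r ≤ C.card)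
    {u v w : ℕ} (hu : u ∈ C) (hv : v ∈ C) (hw : w ∈ C)
    (huv : u ≠ v) (hpc : pc r u = pc r v) (hwZ : w ∉ Zs r) :
    ∃ e ∈ edges r, e ⊆ C := by
  have hsub : ({u, v, w} : Finset ℕ) ⊆ C := by
    intro a ha
    simp only [Finset.mem_insert, Finset.mem_singleton] at ha
    rcases ha with rfl | rfl | rfl <;> assumption
  have h3 : ({u, v, w} : Finset ℕ).card ≤ r := by
    refine le_trans (le_trans (Finset.card_insert_le _ _) ?_) (by omega : 3 ≤ r)
    have := Finset.card_insert_le v ({w} : Finset ℕ)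
    simp only [Finset.card_singleton] at this
    omega
  obtain ⟨e, hse, heC, hecard⟩ := Finset.exists_subsuperset_card_eq hsub h3 hc
  refine ⟨e, mem_edges.mpr ⟨heC.trans hC, hecard,
    ⟨u, hse (by simp), v, hse (by simp), huv, hpc⟩, ?_⟩, heC⟩
  intro hEZ
  exact hwZ (hEZ ▸ hse (by simp))

lemma no_big (hr : 4 ≤ r) (hcol : (H r).IsStrictColoring R) {C : Finset ℕ}
    (hC : C ∈ R) (hc : r ≤ C.card) {u v w : ℕ}
    (hu : u ∈ C) (hv : v ∈ C) (hw : w ∈ C)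
    (huv : u ≠ v) (hpc : pc r u = pc r v) (hwZ : w ∉ Zs r) : False := by
  obtain ⟨e, he, heC⟩ := edge_in hr (hcol.2.1 C hC) hc hu hv hw huv hpc hwZ
  exact indep hcol hC he heC

lemma split_structure (hr : 4 ≤ r) (hcol : (H r).IsStrictColoring R) (hk : r ≤ R.card)
    {u v : ℕ} (hu : u ∈ V r) (hv : v ∈ V r) (hpc : pc r u = pc r v) (huv : u ≠ v)
    (hclne : clR R u ≠ clR R v) :
    R.card = r ∧ u ∈ Zs r ∧ v ∈ Zs r ∧
      ∀ C ∈ R, C ≠ clR R u → C ≠ clR R v → C ⊆ Zs r := by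
  have hsV2 : ({u, v} : Finset ℕ) ⊆ V r := by
    intro a ha
    simp only [Finset.mem_insert, Finset.mem_singleton] at ha
    rcases ha with rfl | rfl <;> assumption
  have hinj2 : ∀ a ∈ ({u, v} : Finset ℕ), ∀ b ∈ ({u, v} : Finset ℕ),
      a ≠ b → clR R a ≠ clR R b := by
    intro a ha b hb hab
    simp only [Finset.mem_insert, Finset.mem_singleton] at ha hb
    rcases ha with rfl | rfl <;> rcases hb with rfl | rfl <;>
      first
        | exact absurd rfl hab
        | exact hclne
        | exact Ne.symm hclne
  have hsc2 : ({u, v} : Finset ℕ).card ≤ r := by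
    rw [Finset.card_pair huv]
    omega
  have hu2 : u ∈ Zs r := by
    by_contra hcon
    exact rainbow_contra hr hcol hk hsV2 hsc2 hinj2 (Finset.mem_insert_self _ _)
      (by simp) (Finset.mem_insert_self _ _) huv hpc hcon
  have hv2 : v ∈ Zs r := by
    have : pc r v = 2 := hpc ▸ pc_eq_two.mpr hu2
    exact pc_eq_two.mp this
  have hthird : ∀ C ∈ R, C ≠ clR R u → C ≠ clR R v → C ⊆ Zs r := by
    intro C hC hCu hCv
    by_contra hsub
    obtain ⟨w, hwC, hwZ⟩ := Finset.not_subset.mp hsub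
    have hwV : w ∈ V r := hcol.2.1 C hC hwC
    have hclw : clR R w = C := (cl_eq hcol hwV hC hwC).symm
    have hsV3 : ({u, v, w} : Finset ℕ) ⊆ V r := by
      intro a ha
      simp only [Finset.mem_insert, Finset.mem_singleton] at ha
      rcases ha with rfl | rfl | rfl <;> assumption
    have hsc3 : ({u, v, w} : Finset ℕ).card ≤ r := by
      refine le_trans (le_trans (Finset.card_insert_le _ _) ?_) (by omega : 3 ≤ r)
      have := Finset.card_insert_le v ({w} : Finset ℕ)
      simp only [Finset.card_singleton] at this
      omega
    have hinj3 : ∀ a ∈ ({u, v, w} : Finset ℕ), ∀ b ∈ ({u, v, w} : Finset ℕ),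
        a ≠ b → clR R a ≠ clR R b := by
      intro a ha b hb hab
      simp only [Finset.mem_insert, Finset.mem_singleton] at ha hb
      rcases ha with rfl | rfl | rfl <;> rcases hb with rfl | rfl | rfl <;>
        first
          | exact absurd rfl hab
          | exact hclne
          | exact Ne.symm hclne
          | (rw [hclw]; first
              | exact Ne.symm hCu
              | exact hCu
              | exact Ne.symm hCv
              | exact hCv)
    exact rainbow_contra hr hcol hk hsV3 hsc3 hinj3 (Finset.mem_insert_self _ _)
      (by simp) (by simp) huv hpc hwZ
  refine ⟨?_, hu2, hv2, hthird⟩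
  have hclu := cl_spec hcol hu
  have hclv := cl_spec hcol hv
  set R' := (R.erase (clR R u)).erase (clR R v) with hR'
  have hmemR' : ∀ C ∈ R', C ∈ R ∧ C ≠ clR R u ∧ C ≠ clR R v := by
    intro C hC
    have h1 := Finset.mem_erase.mp hC
    have h2 := Finset.mem_erase.mp h1.2
    exact ⟨h2.2, h2.1, h1.1⟩
  have hsubZ : ∀ C ∈ R', C ⊆ Zs r \ {u, v} := by
    intro C hC a haC
    obtain ⟨hCR, hCu, hCv⟩ := hmemR' C hC
    rw [Finset.mem_sdiff]
    refine ⟨hthird C hCR hCu hCv haC, ?_⟩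
    simp only [Finset.mem_insert, Finset.mem_singleton]
    push_neg
    constructor
    · rintro rfl
      exact hCu (cl_eq hcol hu hCR haC)
    · rintro rfl
      exact hCv (cl_eq hcol hv hCR haC)
  have hbU : R'.biUnion id ⊆ Zs r \ {u, v} := by
    intro a ha
    obtain ⟨C, hC, haC⟩ := Finset.mem_biUnion.mp ha
    exact hsubZ C hC haC
  have hcZ : (Zs r \ ({u, v} : Finset ℕ)).card = r - 2 := by
    rw [Finset.card_sdiff_of_subset (by
      intro a ha
      simp only [Finset.mem_insert, Finset.mem_singleton] at ha
      rcases ha with rfl | rfl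
      · exact hu2
      · exact hv2)]
    rw [Zs_card, Finset.card_pair huv]
  have hsum := Finset.card_biUnion (s := R') (t := id) (fun C hC D hD hne =>
    class_disj hcol (hmemR' C hC).1 (hmemR' D hD).1 hne)
  have hcount : R'.card ≤ (R'.biUnion id).card := by
    rw [hsum]
    calc R'.card = ∑ _C ∈ R', 1 := by simp
      _ ≤ ∑ C ∈ R', (id C).card :=
        Finset.sum_le_sum (fun C hC => Finset.card_pos.mpr (hcol.1 C (hmemR' C hC).1))
  have hle := le_trans hcount (le_trans (Finset.card_le_card hbU) (le_of_eq hcZ))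
  have hR'card : R'.card = R.card - 2 := by
    have hmem2 : clR R v ∈ R.erase (clR R u) :=
      Finset.mem_erase.mpr ⟨Ne.symm hclne, hclv.1⟩
    rw [hR', Finset.card_erase_of_mem hmem2, Finset.card_erase_of_mem hclu.1]
    omega
  omega

lemma trans_bound (hr : 4 ≤ r) {C : Finset ℕ} (hC : C ⊆ V r)
    (htr : ∀ a ∈ C, ∀ b ∈ C, a ≠ b → pc r a ≠ pc r b) :
    C.card ≤ (r - 2) + (if 0 ∈ C then 1 else 0) + (if 1 ∈ C then 1 else 0) +
      (if (C ∩ Zs r).Nonempty then 1 else 0) := by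
  classical
  have hfib : C.card = ∑ j ∈ Finset.range (r + 1), (C.filter (fun a => pc r a = j)).card :=
    Finset.card_eq_sum_card_fiberwise
      (fun x hx => Finset.mem_range.mpr (by have := pc_le hr (hC hx); omega))
  have hone : ∀ j, (C.filter (fun a => pc r a = j)).card ≤ 1 := by
    intro j
    rw [Finset.card_le_one]
    intro a ha b hb
    rw [Finset.mem_filter] at ha hb
    by_contra hab
    exact htr a ha.1 b hb.1 hab (ha.2.trans hb.2.symm)
  have hsplit : Finset.range (r + 1) = insert 0 (insert 1 (insert 2 (Finset.Ico 3 (r + 1)))) := by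
    ext j
    simp only [Finset.mem_range, Finset.mem_insert, Finset.mem_Ico]
    omega
  rw [hsplit, Finset.sum_insert (by simp [Finset.mem_Ico]),
    Finset.sum_insert (by simp [Finset.mem_Ico]),
    Finset.sum_insert (by simp [Finset.mem_Ico])] at hfib
  have h0 : (C.filter (fun a => pc r a = 0)).card ≤ if 0 ∈ C then 1 else 0 := by
    split_ifs with h
    · exact hone 0
    · rw [Nat.le_zero, Finset.card_eq_zero, Finset.filter_eq_empty_iff]
      intro a ha hpa
      exact h (pc_eq_zero.mp hpa ▸ ha)
  have h1 : (C.filter (fun a => pc r a = 1)).card ≤ if 1 ∈ C then 1 else 0 := by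
    split_ifs with h
    · exact hone 1
    · rw [Nat.le_zero, Finset.card_eq_zero, Finset.filter_eq_empty_iff]
      intro a ha hpa
      exact h (pc_eq_one.mp hpa ▸ ha)
  have h2 : (C.filter (fun a => pc r a = 2)).card ≤ if (C ∩ Zs r).Nonempty then 1 else 0 := by
    split_ifs with h
    · exact hone 2
    · rw [Nat.le_zero, Finset.card_eq_zero, Finset.filter_eq_empty_iff]
      intro a ha hpa
      exact h ⟨a, Finset.mem_inter.mpr ⟨ha, pc_eq_two.mp hpa⟩⟩
  have h3 : ∑ j ∈ Finset.Ico 3 (r + 1), (C.filter (fun a => pc r a = j)).card ≤ r - 2 := by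
    calc ∑ j ∈ Finset.Ico 3 (r + 1), (C.filter (fun a => pc r a = j)).card
        ≤ ∑ _j ∈ Finset.Ico 3 (r + 1), 1 := Finset.sum_le_sum (fun j _ => hone j)
      _ = r - 2 := by
        rw [Finset.sum_const, Nat.card_Ico, smul_eq_mul, mul_one]
        omega
  omega

end OneR

namespace OneR
open Finset

variable {r : ℕ} {R : Finset (Finset ℕ)}

lemma class_le (hr : 4 ≤ r) (hcol : (H r).IsStrictColoring R) {C : Finset ℕ}
    (hC : C ∈ R) (hne : C ≠ Zs r) :
    C.card ≤ r - 1 ∨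
    C.card ≤ (r - 2) + (if 0 ∈ C then 1 else 0) + (if 1 ∈ C then 1 else 0) +
      (if (C ∩ Zs r).Nonempty then 1 else 0) := by
  by_cases hbig : r ≤ C.card
  · right
    have hnsub : ¬ C ⊆ Zs r := fun h =>
      hne (Finset.eq_of_subset_of_card_le h (by rw [Zs_card]; exact hbig))
    obtain ⟨w, hwC, hwZ⟩ := Finset.not_subset.mp hnsub
    have htr : ∀ a ∈ C, ∀ b ∈ C, a ≠ b → pc r a ≠ pc r b := by
      intro a ha b hb hab hpc
      exact no_big hr hcol hC hbig ha hb hwC hab hpc hwZ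
    exact trans_bound hr (hcol.2.1 C hC) htr
  · left
    omega

lemma no_small (hr : 4 ≤ r) (hcol : (H r).IsStrictColoring R) : r ≤ R.card := by
  by_contra hk
  push_neg at hk
  have hsum := sum_card hcol
  set k := R.card with hkdef
  have hc0 := cl_spec hcol (zero_mem_V (r := r))
  have hc1 := cl_spec hcol (one_mem_V (r := r))
  obtain ⟨C0, hC0def⟩ : ∃ C, clR R 0 = C := ⟨_, rfl⟩
  obtain ⟨C1, hC1def⟩ : ∃ C, clR R 1 = C := ⟨_, rfl⟩
  rw [hC0def] at hc0
  rw [hC1def] at hc1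
  have hC0Z : C0 ≠ Zs r := by
    intro h
    have := h ▸ hc0.2
    rw [mem_Zs] at this
    omega
  have hC1Z : C1 ≠ Zs r := by
    intro h
    have := h ▸ hc1.2
    rw [mem_Zs] at this
    omega
  have hmem0 : ∀ C ∈ R, 0 ∈ C → C = C0 :=
    fun C hC h => (cl_eq hcol zero_mem_V hC h).trans hC0def
  have hmem1 : ∀ C ∈ R, 1 ∈ C → C = C1 :=
    fun C hC h => (cl_eq hcol one_mem_V hC h).trans hC1def
  have hgen : ∀ C ∈ R, C ≠ Zs r → C ≠ C0 → C ≠ C1 → C.card ≤ r - 1 := by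
    intro C hC hne hn0 hn1
    rcases class_le hr hcol hC hne with h | h
    · exact h
    · have h0 : (if 0 ∈ C then 1 else 0) = 0 := if_neg (fun hin => hn0 (hmem0 C hC hin))
      have h1 : (if 1 ∈ C then 1 else 0) = 0 := if_neg (fun hin => hn1 (hmem1 C hC hin))
      rw [h0, h1] at h
      have h2 : (if (C ∩ Zs r).Nonempty then 1 else 0) ≤ 1 := by split_ifs <;> omega
      omega
  obtain ⟨s, rfl⟩ : ∃ s, r = s + 4 := ⟨r - 4, by omega⟩
  have hnn : nn (s + 4) = (s + 3) * (s + 3) + 3 := by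
    have e1 : s + 4 - 1 = s + 3 := by omega
    rw [nn, e1]
    ring
  by_cases hz : Zs (s + 4) ∈ R
  · have hdisjZ : ∀ C ∈ R, C ≠ Zs (s + 4) → (if (C ∩ Zs (s + 4)).Nonempty then 1 else 0) = 0 := by
      intro C hC hne
      refine if_neg (fun hnon => ?_)
      obtain ⟨a, ha⟩ := hnon
      have h2 := Finset.mem_inter.mp ha
      exact (Finset.disjoint_left.mp (class_disj hcol hC hz hne) h2.1) h2.2
    by_cases h01 : C0 = C1
    · have hb0 : C0.card ≤ s + 4 := by
        rcases class_le hr hcol hc0.1 hC0Z with h | h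
        · omega
        · rw [hdisjZ C0 hc0.1 hC0Z] at h
          have t0 : (if 0 ∈ C0 then 1 else 0) ≤ 1 := by split_ifs <;> omega
          have t1 : (if 1 ∈ C0 then 1 else 0) ≤ 1 := by split_ifs <;> omega
          omega
      set R2 := (R.erase (Zs (s + 4))).erase C0 with hR2
      have hmemR2 : ∀ C ∈ R2, C ∈ R ∧ C ≠ Zs (s + 4) ∧ C ≠ C0 := by
        intro C hC
        have a1 := Finset.mem_erase.mp hC
        have a2 := Finset.mem_erase.mp a1.2
        exact ⟨a2.2, a2.1, a1.1⟩
      have hsum2 : ∑ C ∈ R2, C.card ≤ R2.card * (s + 3) := by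
        calc ∑ C ∈ R2, C.card ≤ ∑ _C ∈ R2, (s + 3) := Finset.sum_le_sum (fun C hC => by
            have := hgen C (hmemR2 C hC).1 (hmemR2 C hC).2.1 (hmemR2 C hC).2.2
              (h01 ▸ (hmemR2 C hC).2.2)
            omega)
          _ = R2.card * (s + 3) := by rw [Finset.sum_const, smul_eq_mul]
      have hCm : C0 ∈ R.erase (Zs (s + 4)) := Finset.mem_erase.mpr ⟨hC0Z, hc0.1⟩
      have hcard2 : R2.card = k - 2 := by
        rw [hR2, Finset.card_erase_of_mem hCm, Finset.card_erase_of_mem hz]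
        omega
      have hdec : ∑ C ∈ R, C.card = (Zs (s + 4)).card + C0.card + ∑ C ∈ R2, C.card := by
        rw [← Finset.add_sum_erase R _ hz, ← Finset.add_sum_erase (R.erase (Zs (s+4))) _ hCm]
        ring
      rw [hdec, Zs_card] at hsum
      have hmul : R2.card * (s + 3) ≤ (s + 1) * (s + 3) :=
        Nat.mul_le_mul_right _ (by omega)
      nlinarith [hsum, hsum2, hb0, hnn, hmul]
    · have hb0 : C0.card ≤ s + 3 := by
        rcases class_le hr hcol hc0.1 hC0Z with h | h
        · omega
        · rw [hdisjZ C0 hc0.1 hC0Z, if_neg (fun hin => h01 (hmem1 C0 hc0.1 hin))] at h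
          have t0 : (if 0 ∈ C0 then 1 else 0) ≤ 1 := by split_ifs <;> omega
          omega
      have hb1 : C1.card ≤ s + 3 := by
        rcases class_le hr hcol hc1.1 hC1Z with h | h
        · omega
        · rw [hdisjZ C1 hc1.1 hC1Z,
            if_neg (fun hin => h01 (hmem0 C1 hc1.1 hin).symm)] at h
          have t1 : (if 1 ∈ C1 then 1 else 0) ≤ 1 := by split_ifs <;> omega
          omega
      set R3 := ((R.erase (Zs (s + 4))).erase C0).erase C1 with hR3
      have hmemR3 : ∀ C ∈ R3, C ∈ R ∧ C ≠ Zs (s + 4) ∧ C ≠ C0 ∧ C ≠ C1 := by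
        intro C hC
        have a1 := Finset.mem_erase.mp hC
        have a2 := Finset.mem_erase.mp a1.2
        have a3 := Finset.mem_erase.mp a2.2
        exact ⟨a3.2, a3.1, a2.1, a1.1⟩
      have hsum3 : ∑ C ∈ R3, C.card ≤ R3.card * (s + 3) := by
        calc ∑ C ∈ R3, C.card ≤ ∑ _C ∈ R3, (s + 3) := Finset.sum_le_sum (fun C hC => by
            have := hgen C (hmemR3 C hC).1 (hmemR3 C hC).2.1 (hmemR3 C hC).2.2.1
              (hmemR3 C hC).2.2.2
            omega)
          _ = R3.card * (s + 3) := by rw [Finset.sum_const, smul_eq_mul]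
      have hCm : C0 ∈ R.erase (Zs (s + 4)) := Finset.mem_erase.mpr ⟨hC0Z, hc0.1⟩
      have hCm1 : C1 ∈ (R.erase (Zs (s + 4))).erase C0 :=
        Finset.mem_erase.mpr ⟨fun h => h01 h.symm, Finset.mem_erase.mpr ⟨hC1Z, hc1.1⟩⟩
      have hdec : ∑ C ∈ R, C.card
          = (Zs (s + 4)).card + C0.card + C1.card + ∑ C ∈ R3, C.card := by
        rw [← Finset.add_sum_erase R _ hz, ← Finset.add_sum_erase (R.erase (Zs (s+4))) _ hCm,
          ← Finset.add_sum_erase _ _ hCm1]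
        ring
      rw [hdec, Zs_card] at hsum
      have hcard3 : R3.card = k - 3 := by
        rw [hR3, Finset.card_erase_of_mem hCm1, Finset.card_erase_of_mem hCm,
          Finset.card_erase_of_mem hz]
        omega
      have hmul : R3.card * (s + 3) ≤ s * (s + 3) :=
        Nat.mul_le_mul_right _ (by omega)
      nlinarith [hsum, hsum3, hb0, hb1, hnn, hmul]
  · have hallne : ∀ C ∈ R, C ≠ Zs (s + 4) := fun C hC h => hz (h ▸ hC)
    by_cases h01 : C0 = C1
    · have hb0 : C0.card ≤ s + 5 := by
        rcases class_le hr hcol hc0.1 hC0Z with h | h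
        · omega
        · have t0 : (if 0 ∈ C0 then 1 else 0) ≤ 1 := by split_ifs <;> omega
          have t1 : (if 1 ∈ C0 then 1 else 0) ≤ 1 := by split_ifs <;> omega
          have t2 : (if (C0 ∩ Zs (s + 4)).Nonempty then 1 else 0) ≤ 1 := by
            split_ifs <;> omega
          omega
      set R2 := R.erase C0 with hR2
      have hmemR2 : ∀ C ∈ R2, C ∈ R ∧ C ≠ C0 := by
        intro C hC
        have a1 := Finset.mem_erase.mp hC
        exact ⟨a1.2, a1.1⟩
      have hsum2 : ∑ C ∈ R2, C.card ≤ R2.card * (s + 3) := by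
        calc ∑ C ∈ R2, C.card ≤ ∑ _C ∈ R2, (s + 3) := Finset.sum_le_sum (fun C hC => by
            have := hgen C (hmemR2 C hC).1 (hallne C (hmemR2 C hC).1) (hmemR2 C hC).2
              (h01 ▸ (hmemR2 C hC).2)
            omega)
          _ = R2.card * (s + 3) := by rw [Finset.sum_const, smul_eq_mul]
      have hcard2 : R2.card = k - 1 := by
        rw [hR2, Finset.card_erase_of_mem hc0.1]
      have hdec : ∑ C ∈ R, C.card = C0.card + ∑ C ∈ R2, C.card :=
        (Finset.add_sum_erase R _ hc0.1).symm
      rw [hdec] at hsum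
      have hmul : R2.card * (s + 3) ≤ (s + 2) * (s + 3) :=
        Nat.mul_le_mul_right _ (by omega)
      nlinarith [hsum, hsum2, hb0, hnn, hmul]
    · have hb0 : C0.card ≤ s + 4 := by
        rcases class_le hr hcol hc0.1 hC0Z with h | h
        · omega
        · rw [if_neg (fun hin => h01 (hmem1 C0 hc0.1 hin))] at h
          have t0 : (if 0 ∈ C0 then 1 else 0) ≤ 1 := by split_ifs <;> omega
          have t2 : (if (C0 ∩ Zs (s + 4)).Nonempty then 1 else 0) ≤ 1 := by
            split_ifs <;> omega
          omega
      have hb1 : C1.card ≤ s + 4 := by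
        rcases class_le hr hcol hc1.1 hC1Z with h | h
        · omega
        · rw [if_neg (fun hin => h01 (hmem0 C1 hc1.1 hin).symm)] at h
          have t1 : (if 1 ∈ C1 then 1 else 0) ≤ 1 := by split_ifs <;> omega
          have t2 : (if (C1 ∩ Zs (s + 4)).Nonempty then 1 else 0) ≤ 1 := by
            split_ifs <;> omega
          omega
      set R3 := (R.erase C0).erase C1 with hR3
      have hmemR3 : ∀ C ∈ R3, C ∈ R ∧ C ≠ C0 ∧ C ≠ C1 := by
        intro C hC
        have a1 := Finset.mem_erase.mp hC
        have a2 := Finset.mem_erase.mp a1.2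
        exact ⟨a2.2, a2.1, a1.1⟩
      have hsum3 : ∑ C ∈ R3, C.card ≤ R3.card * (s + 3) := by
        calc ∑ C ∈ R3, C.card ≤ ∑ _C ∈ R3, (s + 3) := Finset.sum_le_sum (fun C hC => by
            have := hgen C (hmemR3 C hC).1 (hallne C (hmemR3 C hC).1) (hmemR3 C hC).2.1
              (hmemR3 C hC).2.2
            omega)
          _ = R3.card * (s + 3) := by rw [Finset.sum_const, smul_eq_mul]
      have hCm1 : C1 ∈ R.erase C0 := Finset.mem_erase.mpr ⟨fun h => h01 h.symm, hc1.1⟩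
      have hcard3 : R3.card = k - 2 := by
        rw [hR3, Finset.card_erase_of_mem hCm1, Finset.card_erase_of_mem hc0.1]
        omega
      have hdec : ∑ C ∈ R, C.card = C0.card + C1.card + ∑ C ∈ R3, C.card := by
        rw [← Finset.add_sum_erase R _ hc0.1, ← Finset.add_sum_erase _ _ hCm1]
        ring
      rw [hdec] at hsum
      have hmul : R3.card * (s + 3) ≤ (s + 1) * (s + 3) :=
        Nat.mul_le_mul_right _ (by omega)
      nlinarith [hsum, hsum3, hb0, hb1, hnn, hmul]

end OneR

namespace OneR
open Finset

variable {r : ℕ} {R : Finset (Finset ℕ)}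

lemma Kp_sub_class (hcol : (H r).IsStrictColoring R)
    (hmono : ∀ u ∈ V r, ∀ v ∈ V r, pc r u = pc r v → clR R u = clR R v)
    {C : Finset ℕ} (hC : C ∈ R) {b : ℕ} (hb : b ∈ C) : Kp r (pc r b) ⊆ C := by
  intro a ha
  rw [mem_Kp] at ha
  have hbV : b ∈ V r := hcol.2.1 C hC hb
  have h1 : clR R a = clR R b := hmono a ha.1 b hbV ha.2
  have hCb : C = clR R b := cl_eq hcol hbV hC hb
  have haa : a ∈ clR R a := (cl_spec hcol ha.1).2
  rw [h1, ← hCb] at haa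
  exact haa

lemma sumJ (hr : 4 ≤ r) (hcol : (H r).IsStrictColoring R)
    (hmono : ∀ u ∈ V r, ∀ v ∈ V r, pc r u = pc r v → clR R u = clR R v) :
    ∑ C ∈ R, (C.image (pc r)).card = r + 1 := by
  have hdisj : ∀ C ∈ R, ∀ D ∈ R, C ≠ D → Disjoint (C.image (pc r)) (D.image (pc r)) := by
    intro C hC D hD hne
    rw [Finset.disjoint_left]
    intro j hjC hjD
    obtain ⟨a, ha, rfl⟩ := Finset.mem_image.mp hjC
    obtain ⟨b, hb, hba⟩ := Finset.mem_image.mp hjD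
    have haV : a ∈ V r := hcol.2.1 C hC ha
    have hbV : b ∈ V r := hcol.2.1 D hD hb
    have h1 : clR R a = clR R b := hmono a haV b hbV hba.symm
    exact hne ((cl_eq hcol haV hC ha).trans (h1.trans (cl_eq hcol hbV hD hb).symm))
  have hcover : R.biUnion (fun C => C.image (pc r)) = Finset.range (r + 1) := by
    apply Finset.Subset.antisymm
    · intro j hj
      obtain ⟨C, hC, hjC⟩ := Finset.mem_biUnion.mp hj
      obtain ⟨a, ha, rfl⟩ := Finset.mem_image.mp hjC
      exact Finset.mem_range.mpr (by have := pc_le hr (hcol.2.1 C hC ha); omega)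
    · intro j hj
      obtain ⟨a, ha⟩ := Kp_nonempty hr (by have := Finset.mem_range.mp hj; omega : j ≤ r)
      rw [mem_Kp] at ha
      exact Finset.mem_biUnion.mpr ⟨clR R a, (cl_spec hcol ha.1).1,
        Finset.mem_image.mpr ⟨a, (cl_spec hcol ha.1).2, ha.2⟩⟩
  have := Finset.card_biUnion hdisj (s := R) (t := fun C => C.image (pc r))
  rw [hcover, Finset.card_range] at this
  exact this.symm

lemma Jc_pos (hcol : (H r).IsStrictColoring R) {C : Finset ℕ} (hC : C ∈ R) :
    1 ≤ (C.image (pc r)).card := by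
  obtain ⟨b, hb⟩ := hcol.1 C hC
  exact Finset.card_pos.mpr ⟨pc r b, Finset.mem_image_of_mem _ hb⟩

lemma fiber_class (hr : 4 ≤ r) (hcol : (H r).IsStrictColoring R)
    (hmono : ∀ u ∈ V r, ∀ v ∈ V r, pc r u = pc r v → clR R u = clR R v)
    {C : Finset ℕ} (hC : C ∈ R) (hJ : (C.image (pc r)).card = 1) :
    ∃ j, j ≤ r ∧ C = Kp r j := by
  obtain ⟨j, hj⟩ := Finset.card_eq_one.mp hJ
  obtain ⟨b, hb⟩ := hcol.1 C hC
  have hbV : b ∈ V r := hcol.2.1 C hC hb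
  have hpcb : pc r b = j := by
    have : pc r b ∈ C.image (pc r) := Finset.mem_image_of_mem _ hb
    rw [hj] at this
    simpa using this
  refine ⟨j, by rw [← hpcb]; exact pc_le hr hbV, ?_⟩
  apply Finset.Subset.antisymm
  · intro a ha
    have haV : a ∈ V r := hcol.2.1 C hC ha
    have hpa : pc r a ∈ C.image (pc r) := Finset.mem_image_of_mem _ ha
    rw [hj, Finset.mem_singleton] at hpa
    exact mem_Kp.mpr ⟨haV, hpa⟩
  · rw [← hpcb]
    exact Kp_sub_class hcol hmono hC hb

lemma card_le_succ (hr : 4 ≤ r) (hcol : (H r).IsStrictColoring R) : R.card ≤ r + 1 := by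
  by_cases hmono : ∀ u ∈ V r, ∀ v ∈ V r, pc r u = pc r v → clR R u = clR R v
  · have hsum := sumJ hr hcol hmono
    have : R.card = ∑ _C ∈ R, 1 := by simp
    have hle : ∑ _C ∈ R, 1 ≤ ∑ C ∈ R, (C.image (pc r)).card :=
      Finset.sum_le_sum (fun C hC => Jc_pos hcol hC)
    omega
  · push_neg at hmono
    obtain ⟨u, hu, v, hv, hpc, hne⟩ := hmono
    have huv : u ≠ v := fun h => hne (h ▸ rfl)
    have := (split_structure hr hcol (no_small hr hcol) hu hv hpc huv hne).1
    omega

lemma classify_succ (hr : 4 ≤ r) (hcol : (H r).IsStrictColoring R)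
    (hk : R.card = r + 1) : R = Pp r := by
  have hmono : ∀ u ∈ V r, ∀ v ∈ V r, pc r u = pc r v → clR R u = clR R v := by
    by_contra hcon
    push_neg at hcon
    obtain ⟨u, hu, v, hv, hpc, hne⟩ := hcon
    have huv : u ≠ v := fun h => hne (h ▸ rfl)
    have := (split_structure hr hcol (by omega) hu hv hpc huv hne).1
    omega
  have hsum := sumJ hr hcol hmono
  have hone : ∀ C ∈ R, (C.image (pc r)).card = 1 := by
    have heq : ∑ _C ∈ R, 1 = ∑ C ∈ R, (C.image (pc r)).card := by
      simp only [Finset.sum_const, smul_eq_mul, mul_one]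
      omega
    have := (Finset.sum_eq_sum_iff_of_le (fun C hC => Jc_pos hcol hC)).mp heq
    intro C hC
    exact (this C hC).symm
  have hsub : R ⊆ Pp r := by
    intro C hC
    obtain ⟨j, hjr, rfl⟩ := fiber_class hr hcol hmono hC (hone C hC)
    exact Finset.mem_image.mpr ⟨j, Finset.mem_range.mpr (by omega), rfl⟩
  exact (Finset.eq_of_subset_of_card_le hsub (by rw [card_Pp hr, hk])).symm.symm

lemma merge_bad (hr : 4 ≤ r) (hcol : (H r).IsStrictColoring R)
    {Cs : Finset ℕ} (hCs : Cs ∈ R) {j1 j2 : ℕ} (hne : j1 ≠ j2)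
    (hj1r : j1 ≤ r) (hj2r : j2 ≤ r) (h2 : 2 ≤ j2)
    (hCsv : Cs = Kp r j1 ∪ Kp r j2) : False := by
  have hdisjK : Disjoint (Kp r j1) (Kp r j2) := by
    rw [Finset.disjoint_left]
    intro a ha hb
    exact hne ((mem_Kp.mp ha).2.symm.trans (mem_Kp.mp hb).2)
  have hcard2 : 1 < (Kp r j2).card := by
    rcases Nat.lt_or_ge j2 3 with h | h
    · have hj2 : j2 = 2 := by omega
      rw [hj2, Kp_two hr, Zs_card]
      omega
    · rw [Kp_card_big hr h hj2r]
      omega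
  obtain ⟨a, ha, b, hb, hab⟩ := Finset.one_lt_card.mp hcard2
  have hpcab : pc r a = pc r b := by rw [(mem_Kp.mp ha).2, (mem_Kp.mp hb).2]
  have haCs : a ∈ Cs := hCsv ▸ Finset.mem_union_right _ ha
  have hbCs : b ∈ Cs := hCsv ▸ Finset.mem_union_right _ hb
  have hcardCs : r ≤ Cs.card := by
    have : Cs.card = (Kp r j1).card + (Kp r j2).card := by
      rw [hCsv, Finset.card_union_of_disjoint hdisjK]
    have h1 : 1 ≤ (Kp r j1).card := Kp_card hr hj1r
    rcases Nat.lt_or_ge j2 3 with hcase | hcase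
    · have hj2 : j2 = 2 := by omega
      have : (Kp r j2).card = r := by rw [hj2, Kp_two hr, Zs_card]
      omega
    · have h2c : (Kp r j2).card = r - 1 := Kp_card_big hr hcase hj2r
      omega
  by_cases hw : j1 = 2
  · -- j2 ≠ 2, so a itself is outside Zs
    have haZ : a ∉ Zs r := notMem_Zs_of_pc (by rw [(mem_Kp.mp ha).2]; omega)
    exact no_big hr hcol hCs hcardCs haCs hbCs haCs hab hpcab haZ
  · obtain ⟨w, hw1⟩ := Kp_nonempty hr hj1r
    have hwZ : w ∉ Zs r := notMem_Zs_of_pc (by rw [(mem_Kp.mp hw1).2]; exact hw)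
    have hwCs : w ∈ Cs := hCsv ▸ Finset.mem_union_left _ hw1
    exact no_big hr hcol hCs hcardCs haCs hbCs hwCs hab hpcab hwZ

lemma classify_eq (hr : 4 ≤ r) (hcol : (H r).IsStrictColoring R)
    (hk : R.card = r) : R = Qq r := by
  -- step 1: no split at all
  have hmono : ∀ u ∈ V r, ∀ v ∈ V r, pc r u = pc r v → clR R u = clR R v := by
    by_contra hcon
    push_neg at hcon
    obtain ⟨u, hu, v, hv, hpc, hne⟩ := hcon
    have huv : u ≠ v := fun h => hne (h ▸ rfl)
    obtain ⟨hcard, huZ, hvZ, hthird⟩ :=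
      split_structure hr hcol (by omega) hu hv hpc huv hne
    have h3card : (Kp r 3).card = r - 1 := Kp_card_big hr (le_refl 3) (by omega)
    obtain ⟨a, ha, b, hb, hab⟩ := Finset.one_lt_card.mp (by omega : 1 < (Kp r 3).card)
    have haV : a ∈ V r := (mem_Kp.mp ha).1
    have hbV : b ∈ V r := (mem_Kp.mp hb).1
    have hpc3 : pc r a = pc r b := by rw [(mem_Kp.mp ha).2, (mem_Kp.mp hb).2]
    have haZ : a ∉ Zs r := notMem_Zs_of_pc (by rw [(mem_Kp.mp ha).2]; omega)
    have hWR : clR R a ∈ R := (cl_spec hcol haV).1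
    have hK3W : Kp r 3 ⊆ clR R a := by
      intro c hc
      have hcV : c ∈ V r := (mem_Kp.mp hc).1
      have hclca : clR R c = clR R a := by
        by_contra hne2
        have hac : c ≠ a := fun h => hne2 (h ▸ rfl)
        obtain ⟨-, hcZ, -, -⟩ := split_structure hr hcol (by omega) hcV haV
          (by rw [(mem_Kp.mp hc).2, (mem_Kp.mp ha).2]) hac hne2
        exact (notMem_Zs_of_pc (by rw [(mem_Kp.mp hc).2]; omega)) hcZ
      rw [← hclca]
      exact (cl_spec hcol hcV).2
    have hWcase : clR R a = clR R u ∨ clR R a = clR R v := by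
      by_contra hcon2
      push_neg at hcon2
      exact haZ (hthird (clR R a) hWR hcon2.1 hcon2.2 (cl_spec hcol haV).2)
    have hbig : ∀ x : ℕ, x ∈ Zs r → x ∈ clR R a → False := by
      intro x hxZ hxW
      have hxK3 : x ∉ Kp r 3 := fun h =>
        (notMem_Zs_of_pc (by rw [(mem_Kp.mp h).2]; omega)) hxZ
      have hcardW : r ≤ (clR R a).card := by
        have hsub2 : insert x (Kp r 3) ⊆ clR R a := by
          intro y hy
          rcases Finset.mem_insert.mp hy with rfl | hy
          · exact hxW
          · exact hK3W hy
        have := Finset.card_le_card hsub2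
        rw [Finset.card_insert_of_notMem hxK3, h3card] at this
        omega
      exact no_big hr hcol hWR hcardW (hK3W ha) (hK3W hb) (hK3W ha) hab hpc3 haZ
    rcases hWcase with hW | hW
    · exact hbig u huZ (hW ▸ (cl_spec hcol hu).2)
    · exact hbig v hvZ (hW ▸ (cl_spec hcol hv).2)
  -- step 2: one merged class
  have hsumJ := sumJ hr hcol hmono
  have hex : ∃ Cs ∈ R, 2 ≤ (Cs.image (pc r)).card := by
    by_contra hcon
    push_neg at hcon
    have hle : ∑ C ∈ R, (C.image (pc r)).card ≤ ∑ _C ∈ R, 1 :=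
      Finset.sum_le_sum (fun C hC => by have := hcon C hC; omega)
    simp only [Finset.sum_const, smul_eq_mul, mul_one] at hle
    omega
  obtain ⟨Cs, hCs, hCs2⟩ := hex
  have hsplitsum : (Cs.image (pc r)).card + ∑ C ∈ R.erase Cs, (C.image (pc r)).card
      = r + 1 := by
    exact (Finset.add_sum_erase R (fun C => (C.image (pc r)).card) hCs).trans hsumJ
  have hrestge : (R.erase Cs).card ≤ ∑ C ∈ R.erase Cs, (C.image (pc r)).card := by
    calc (R.erase Cs).card = ∑ _C ∈ R.erase Cs, 1 := by simp
      _ ≤ _ := Finset.sum_le_sum (fun C hC => Jc_pos hcol (Finset.mem_of_mem_erase hC))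
  have hrcard : (R.erase Cs).card = r - 1 := by
    rw [Finset.card_erase_of_mem hCs, hk]
  have hCscard : (Cs.image (pc r)).card = 2 := by omega
  have hrest1 : ∀ C ∈ R.erase Cs, (C.image (pc r)).card = 1 := by
    have heq : ∑ _C ∈ R.erase Cs, 1 = ∑ C ∈ R.erase Cs, (C.image (pc r)).card := by
      simp only [Finset.sum_const, smul_eq_mul, mul_one]
      omega
    have := (Finset.sum_eq_sum_iff_of_le
      (fun C hC => Jc_pos hcol (Finset.mem_of_mem_erase hC))).mp heq
    intro C hC
    exact (this C hC).symm
  obtain ⟨j1, j2, hj12, hJCs⟩ := Finset.card_eq_two.mp hCscard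
  have hj1m : j1 ∈ Cs.image (pc r) := by rw [hJCs]; simp
  have hj2m : j2 ∈ Cs.image (pc r) := by rw [hJCs]; simp
  obtain ⟨b1, hb1, hpcb1⟩ := Finset.mem_image.mp hj1m
  obtain ⟨b2, hb2, hpcb2⟩ := Finset.mem_image.mp hj2m
  have hj1r : j1 ≤ r := hpcb1 ▸ pc_le hr (hcol.2.1 Cs hCs hb1)
  have hj2r : j2 ≤ r := hpcb2 ▸ pc_le hr (hcol.2.1 Cs hCs hb2)
  have hCsv : Cs = Kp r j1 ∪ Kp r j2 := by
    apply Finset.Subset.antisymm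
    · intro a ha
      have hpa : pc r a ∈ Cs.image (pc r) := Finset.mem_image_of_mem _ ha
      rw [hJCs] at hpa
      simp only [Finset.mem_insert, Finset.mem_singleton] at hpa
      have haV : a ∈ V r := hcol.2.1 Cs hCs ha
      rcases hpa with h | h
      · exact Finset.mem_union_left _ (mem_Kp.mpr ⟨haV, h⟩)
      · exact Finset.mem_union_right _ (mem_Kp.mpr ⟨haV, h⟩)
    · intro a ha
      rcases Finset.mem_union.mp ha with h | h
      · exact (hpcb1 ▸ Kp_sub_class hcol hmono hCs hb1) h
      · exact (hpcb2 ▸ Kp_sub_class hcol hmono hCs hb2) h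
  -- the merged pair must be {0,1}
  have hsmall : j1 ≤ 1 ∧ j2 ≤ 1 := by
    constructor
    · by_contra hbig
      exact merge_bad hr hcol hCs (Ne.symm hj12) hj2r hj1r (by omega)
        (hCsv.trans (Finset.union_comm _ _))
    · by_contra hbig
      exact merge_bad hr hcol hCs hj12 hj1r hj2r (by omega) hCsv
  have hCs01 : Cs = ({0, 1} : Finset ℕ) := by
    have : (j1 = 0 ∧ j2 = 1) ∨ (j1 = 1 ∧ j2 = 0) := by omega
    rcases this with ⟨h1, h2⟩ | ⟨h1, h2⟩
    · rw [hCsv, h1, h2, Kp_zero hr, Kp_one hr]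
      rfl
    · rw [hCsv, h1, h2, Kp_zero hr, Kp_one hr]
      ext x
      simp only [Finset.mem_union, Finset.mem_singleton, Finset.mem_insert]
      omega
  -- now show R ⊆ Qq
  have hsub : R ⊆ Qq r := by
    intro C hC
    by_cases hCeq : C = Cs
    · rw [hCeq, hCs01]
      exact Finset.mem_insert_self _ _
    · obtain ⟨j, hjr, hCKp⟩ := fiber_class hr hcol hmono hC
        (hrest1 C (Finset.mem_erase.mpr ⟨hCeq, hC⟩))
      have hj2 : 2 ≤ j := by
        by_contra hjs
        have hdisj := class_disj hcol hC hCs hCeq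
        interval_cases j
        · have h0C : (0 : ℕ) ∈ C := by
            rw [hCKp, Kp_zero hr]
            simp
          have h0Cs : (0 : ℕ) ∈ Cs := by
            rw [hCs01]
            simp
          exact Finset.disjoint_left.mp hdisj h0C h0Cs
        · have h1C : (1 : ℕ) ∈ C := by
            rw [hCKp, Kp_one hr]
            simp
          have h1Cs : (1 : ℕ) ∈ Cs := by
            rw [hCs01]
            simp
          exact Finset.disjoint_left.mp hdisj h1C h1Cs
      rw [hCKp]
      exact Finset.mem_insert_of_mem (Finset.mem_image.mpr
        ⟨j, Finset.mem_Ico.mpr ⟨hj2, by omega⟩, rfl⟩)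
  exact Finset.eq_of_subset_of_card_le hsub (by rw [card_Qq hr, hk])

end OneR
theorem stmt15 (r : ℕ) (hr : 4 ≤ r) :
    ∃ H : BiHypergraph ℕ, H.IsUniform r ∧
      H.verts.card = (r - 1) ^ 2 + 3 ∧
      H.IsOneRealization {r + 1, r} := by
  refine ⟨OneR.H r, ?_, ?_, ?_, ?_⟩
  · intro e he
    exact (OneR.mem_edges.mp he).2.1
  · show (OneR.V r).card = _
    rw [OneR.card_V]
    rfl
  · ext k
    simp only [BiHypergraph.feasibleSet, Set.mem_setOf_eq, Finset.coe_insert, Set.mem_insert_iff,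
      Finset.coe_singleton, Set.mem_singleton_iff]
    constructor
    · rintro ⟨P, hP, rfl⟩
      have h1 := OneR.no_small hr hP
      have h2 := OneR.card_le_succ hr hP
      omega
    · rintro (h | h)
      · exact ⟨OneR.Pp r, OneR.strict_Pp hr, by rw [OneR.card_Pp hr]; omega⟩
      · exact ⟨OneR.Qq r, OneR.strict_Qq hr, by rw [OneR.card_Qq hr]; omega⟩
  · intro P Q hP hQ hcard
    have h1 := OneR.no_small hr hP
    have h2 := OneR.card_le_succ hr hP
    rcases (by omega : P.card = r ∨ P.card = r + 1) with h | h
    · rw [OneR.classify_eq hr hP h, OneR.classify_eq hr hQ (by omega)]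
    · rw [OneR.classify_succ hr hP h, OneR.classify_succ hr hQ (by omega)]
end
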